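/- For every integer s ≥ 2 and every ε > 0 there exists η with 0 < η ≤ 1 such that the following holds. Let Z be a finite additive group, let ν : Z → ℝ be nonnegative with ‖ν − 1‖_{U^{2s}(Z)} ≤ η, and let f : Z → ℝ with |f(x)| ≤ ν(x) for all x ∈ Z. If ‖f‖_{w^s(Z)} ≤ η, then ‖f‖_{U^s(Z)} ≤ ε. -/

import Mathlib

open Finset

/-- The average of a real-valued function on a finite type. -/
noncomputable def avg (α : Type*) [Fintype α] (f : α → ℝ) : ℝ :=
  (∑ x, f x) / (Fintype.card α : ℝ)

/-- The Gowers uniformity norm `‖f‖_{U^s(Z)}` of `f : Z → ℝ`. -/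
noncomputable def gowersNorm (Z : Type*) [AddCommGroup Z] [Fintype Z] (s : ℕ) (f : Z → ℝ) : ℝ :=
  (avg (Z × (Fin s → Z)) fun xh =>
      ∏ ω : Fin s → Bool, f (xh.1 + ∑ i, if ω i then xh.2 i else 0)) ^ (((2 : ℝ) ^ s)⁻¹)

/-- The weak uniformity norm `‖f‖_{w^s(Z)}` of `f : Z → ℝ`. -/
noncomputable def weakNorm (Z : Type*) [AddCommGroup Z] [Fintype Z] (s : ℕ) (f : Z → ℝ) : ℝ :=
  sSup {r : ℝ | ∃ h : (Fin s → Bool) → Z → ℝ,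
    (∀ ω x, h ω x ∈ Set.Icc (-1 : ℝ) 1) ∧
    r = avg (Z × (Fin s → Z)) fun xh =>
      f xh.1 * ∏ ω ∈ Finset.univ.filter (fun ω : Fin s → Bool => ω ≠ fun _ => false),
        h ω (xh.1 + ∑ i, if ω i then xh.2 i else 0)}

section AvgLemmas
variable {α β : Type*} [Fintype α] [Fintype β]

lemma div_le_div_nonneg_den {a b c : ℝ} (h : a ≤ b) (hc : 0 ≤ c) : a / c ≤ b / c := by
  rcases eq_or_lt_of_le hc with rfl | hc'
  · simp
  · exact (div_le_div_iff_of_pos_right hc').mpr h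

lemma avg_nonneg' {f : α → ℝ} (h : ∀ x, 0 ≤ f x) : 0 ≤ avg α f :=
  div_nonneg (Finset.sum_nonneg fun i _ => h i) (Nat.cast_nonneg _)

lemma avg_mono {f g : α → ℝ} (h : ∀ x, f x ≤ g x) : avg α f ≤ avg α g :=
  div_le_div_nonneg_den (Finset.sum_le_sum fun i _ => h i) (Nat.cast_nonneg _)

lemma abs_avg_le {f : α → ℝ} : |avg α f| ≤ avg α (fun x => |f x|) := by
  unfold avg
  rw [abs_div, abs_of_nonneg (a := ((Fintype.card α : ℕ) : ℝ)) (Nat.cast_nonneg _)]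
  exact div_le_div_nonneg_den (Finset.abs_sum_le_sum_abs _ _) (Nat.cast_nonneg _)

lemma avg_const [Nonempty α] (c : ℝ) : avg α (fun _ => c) = c := by
  unfold avg
  rw [Finset.sum_const, card_univ, nsmul_eq_mul]
  rw [mul_div_assoc]
  have : ((Fintype.card α : ℕ) : ℝ) ≠ 0 := by exact_mod_cast Fintype.card_ne_zero
  field_simp

lemma avg_one [Nonempty α] : avg α (fun _ => (1:ℝ)) = 1 := avg_const 1

lemma avg_add (f g : α → ℝ) : avg α (fun x => f x + g x) = avg α f + avg α g := by
  unfold avg; rw [Finset.sum_add_distrib, add_div]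

lemma avg_sub (f g : α → ℝ) : avg α (fun x => f x - g x) = avg α f - avg α g := by
  unfold avg; rw [Finset.sum_sub_distrib, sub_div]

lemma avg_mul_left (c : ℝ) (f : α → ℝ) : avg α (fun x => c * f x) = c * avg α f := by
  unfold avg; rw [← Finset.mul_sum, mul_div_assoc]

lemma avg_sum {γ : Type*} (s : Finset γ) (f : γ → α → ℝ) :
    avg α (fun x => ∑ t ∈ s, f t x) = ∑ t ∈ s, avg α (f t) := by
  unfold avg
  rw [Finset.sum_comm, Finset.sum_div]

lemma avg_comp_equiv (e : α ≃ β) (f : β → ℝ) : avg α (fun x => f (e x)) = avg β f := by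
  unfold avg
  rw [Equiv.sum_comp e f, Fintype.card_congr e]

lemma avg_prod (F : α × β → ℝ) : avg (α × β) F = avg α (fun a => avg β (fun b => F (a, b))) := by
  unfold avg
  rw [Fintype.sum_prod_type, Fintype.card_prod, ← Finset.sum_div, div_div]
  push_cast
  rw [mul_comm ((Fintype.card β : ℝ))]

lemma avg_prod_mul (p : α → ℝ) (q : β → ℝ) :
    avg (α × β) (fun ab => p ab.1 * q ab.2) = avg α p * avg β q := by
  rw [avg_prod]
  have h1 : (fun a => avg β fun b => p a * q b) = fun a => p a * avg β q :=
    funext fun a => avg_mul_left (p a) q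
  rw [h1]
  have h2 := avg_mul_left (α := α) (avg β q) p
  simp only [mul_comm] at h2 ⊢
  rw [← h2]

/-- weighted Cauchy–Schwarz for averages -/
lemma avg_weighted_cs (w a b : α → ℝ) (hw : ∀ x, 0 ≤ w x) :
    (avg α (fun x => w x * (a x * b x))) ^ 2 ≤
      avg α (fun x => w x * a x ^ 2) * avg α (fun x => w x * b x ^ 2) := by
  unfold avg
  rw [div_pow, div_mul_div_comm, ← sq ((Fintype.card α : ℝ))]
  apply div_le_div_nonneg_den _ (sq_nonneg _)
  have key : (∑ x, (Real.sqrt (w x) * a x) * (Real.sqrt (w x) * b x)) ^ 2 ≤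
      (∑ x, (Real.sqrt (w x) * a x) ^ 2) * ∑ x, (Real.sqrt (w x) * b x) ^ 2 :=
    Finset.sum_mul_sq_le_sq_mul_sq _ _ _
  have e1 : ∀ x, (Real.sqrt (w x) * a x) * (Real.sqrt (w x) * b x) = w x * (a x * b x) := by
    intro x
    have := Real.mul_self_sqrt (hw x)
    ring_nf
    rw [Real.sq_sqrt (hw x)]
    ring
  have e2 : ∀ x, (Real.sqrt (w x) * a x) ^ 2 = w x * a x ^ 2 := by
    intro x; rw [mul_pow, Real.sq_sqrt (hw x)]
  have e3 : ∀ x, (Real.sqrt (w x) * b x) ^ 2 = w x * b x ^ 2 := by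
    intro x; rw [mul_pow, Real.sq_sqrt (hw x)]
  calc (∑ x, w x * (a x * b x)) ^ 2 = (∑ x, (Real.sqrt (w x) * a x) * (Real.sqrt (w x) * b x)) ^ 2 := by
        congr 1; exact Finset.sum_congr rfl fun x _ => (e1 x).symm
    _ ≤ (∑ x, (Real.sqrt (w x) * a x) ^ 2) * ∑ x, (Real.sqrt (w x) * b x) ^ 2 := key
    _ = (∑ x, w x * a x ^ 2) * ∑ x, w x * b x ^ 2 := by
        congr 1
        · exact Finset.sum_congr rfl fun x _ => e2 x
        · exact Finset.sum_congr rfl fun x _ => e3 x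

end AvgLemmas
section GipDef
variable {Z : Type*} [AddCommGroup Z] [Fintype Z] {ι : Type*} [Fintype ι] [DecidableEq ι]

/-- `∑ i, if ω i then h i else 0` -/
def lsum (ω : ι → Bool) (h : ι → Z) : Z := ∑ i, if ω i then h i else 0

noncomputable def gip (ι : Type*) (Z : Type*) [Fintype ι] [DecidableEq ι] [AddCommGroup Z] [Fintype Z]
    (g : (ι → Bool) → Z → ℝ) : ℝ :=
  avg (Z × (ι → Z)) fun xh => ∏ ω : ι → Bool, g ω (xh.1 + lsum ω xh.2)

lemma lsum_update_zero (ω : ι → Bool) (h : ι → Z) (i : ι) :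
    lsum ω h = (if ω i then h i else 0) + lsum ω (Function.update h i 0) := by
  unfold lsum
  have h1 : (fun j => if ω j then Function.update h i 0 j else 0)
      = Function.update (fun j => if ω j then h j else 0) i 0 := by
    funext j
    rcases eq_or_ne j i with rfl | hj
    · simp
    · simp [Function.update_of_ne hj]
  rw [show (∑ j, if ω j then Function.update h i 0 j else 0)
      = ∑ j, Function.update (fun j => if ω j then h j else 0) i 0 j by
    exact Finset.sum_congr rfl fun j _ => congrFun h1 j]
  rw [Finset.sum_update_of_mem (Finset.mem_univ i), zero_add]
  exact Finset.sum_eq_add_sum_sdiff_singleton_of_mem (Finset.mem_univ i) _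

lemma lsum_congr_update (ω : ι → Bool) (i : ι) (b : Bool) (h : ι → Z) (hh : h i = 0) :
    lsum (Function.update ω i b) h = lsum ω h := by
  unfold lsum
  apply Finset.sum_congr rfl
  intro j _
  rcases eq_or_ne j i with rfl | hj
  · simp [hh]
  · simp [Function.update_of_ne hj]

lemma lsum_zero_fun (h : ι → Z) : lsum (fun _ => false) h = 0 := by simp [lsum]

variable [Nonempty Z]

/-- replace one slot of the tuple by a fresh average -/
lemma avg_update_slot (i : ι) (W : (ι → Z) → ℝ) :
    avg (ι → Z) W = avg ((ι → Z) × Z) (fun hz => W (Function.update hz.1 i hz.2)) := by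
  have key : avg ((ι → Z) × Z) (fun hz => W (Function.update hz.1 i hz.2))
      = avg ((ι → Z) × Z) (fun hz => W hz.1) := by
    rw [← avg_comp_equiv
      (⟨fun hz => (Function.update hz.1 i hz.2, hz.1 i),
        fun hz => (Function.update hz.1 i hz.2, hz.1 i),
        by rintro ⟨h, z⟩; simp [Function.update_idem, Function.update_eq_self],
        by rintro ⟨h, z⟩; simp [Function.update_idem, Function.update_eq_self]⟩ :
        ((ι → Z) × Z) ≃ ((ι → Z) × Z))
      (fun hz => W (Function.update hz.1 i hz.2))]
    apply congrArg
    funext hz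
    simp only [Equiv.coe_fn_mk]
    rw [Function.update_idem, Function.update_eq_self]
  rw [key, avg_prod]
  apply congrArg
  funext h
  exact (avg_const _).symm

lemma gip_split (g : (ι → Bool) → Z → ℝ) (i : ι) :
    gip ι Z g = avg (ι → Z) (fun h =>
      (avg Z fun x => ∏ ω ∈ Finset.univ.filter (fun ω : ι → Bool => ω i = false),
        g ω (x + lsum ω (Function.update h i 0))) *
      (avg Z fun z => ∏ ω ∈ Finset.univ.filter (fun ω : ι → Bool => ω i = true),
        g ω (z + lsum ω (Function.update h i 0)))) := by
  classical
  set A : Z → (ι → Z) → ℝ := fun x h => ∏ ω ∈ Finset.univ.filter (fun ω : ι → Bool => ω i = false),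
    g ω (x + lsum ω (Function.update h i 0)) with hA
  set B : Z → (ι → Z) → ℝ := fun z h => ∏ ω ∈ Finset.univ.filter (fun ω : ι → Bool => ω i = true),
    g ω (z + lsum ω (Function.update h i 0)) with hB
  have hAupd : ∀ x h z, A x (Function.update h i z) = A x h := by
    intro x h z; simp only [hA, Function.update_idem]
  have hBupd : ∀ x h z, B x (Function.update h i z) = B x h := by
    intro x h z; simp only [hB, Function.update_idem]
  -- step 1: integrand factorization
  have step1 : ∀ x (h : ι → Z),
      (∏ ω : ι → Bool, g ω (x + lsum ω h)) = A x h * B (x + h i) h := by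
    intro x h
    have hsplit := Finset.prod_filter_mul_prod_filter_not (Finset.univ : Finset (ι → Bool))
      (fun ω => ω i = false) (fun ω => g ω (x + lsum ω h))
    rw [← hsplit]
    congr 1
    · apply Finset.prod_congr rfl
      intro ω hω
      simp only [Finset.mem_filter] at hω
      rw [lsum_update_zero ω h i, hω.2, if_neg (by simp)]
      rw [zero_add]
    · have hfil : Finset.univ.filter (fun ω : ι → Bool => ¬ ω i = false)
          = Finset.univ.filter (fun ω : ι → Bool => ω i = true) := by
        apply Finset.filter_congr
        intro ω _
        simp
      rw [hfil]
      apply Finset.prod_congr rfl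
      intro ω hω
      simp only [Finset.mem_filter] at hω
      rw [lsum_update_zero ω h i, hω.2, if_pos rfl, ← add_assoc]
  have step2 : gip ι Z g = avg (Z × (ι → Z)) (fun xh => A xh.1 xh.2 * B (xh.1 + xh.2 i) xh.2) := by
    unfold gip
    apply congrArg
    funext xh
    exact step1 xh.1 xh.2
  -- step 3: decouple via bijection
  have step3 : gip ι Z g = avg (Z × (ι → Z)) (fun xh => A xh.1 xh.2 * B (xh.2 i) xh.2) := by
    rw [step2, ← avg_comp_equiv
      (⟨fun xh => (xh.1, Function.update xh.2 i (xh.1 + xh.2 i)),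
        fun xh => (xh.1, Function.update xh.2 i (-xh.1 + xh.2 i)),
        by rintro ⟨x, h⟩; simp [Function.update_idem, Function.update_eq_self],
        by rintro ⟨x, h⟩; simp [Function.update_idem, Function.update_eq_self]⟩ :
        (Z × (ι → Z)) ≃ (Z × (ι → Z)))
      (fun xh => A xh.1 xh.2 * B (xh.2 i) xh.2)]
    apply congrArg
    funext xh
    simp only [Equiv.coe_fn_mk]
    rw [hAupd, hBupd, Function.update_self]
  -- step 4: inner average over x
  have step4 : gip ι Z g = avg (ι → Z) (fun h => (avg Z fun x => A x h) * B (h i) h) := by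
    rw [step3, ← avg_comp_equiv (Equiv.prodComm (ι → Z) Z) ]
    rw [avg_prod]
    apply congrArg
    funext h
    show avg Z (fun x => A x h * B (h i) h) = _
    rw [show (fun x => A x h * B (h i) h) = (fun x => B (h i) h * A x h) from
      funext fun x => mul_comm _ _, avg_mul_left, mul_comm]
  -- step 5: inner average over the slot
  rw [step4, avg_update_slot i]
  rw [show (fun (hz : (ι → Z) × Z) =>
        (avg Z fun x => A x (Function.update hz.1 i hz.2)) *
          B ((Function.update hz.1 i hz.2) i) (Function.update hz.1 i hz.2))
      = (fun hz => (avg Z fun x => A x hz.1) * B hz.2 hz.1) from by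
    funext hz
    rw [Function.update_self]
    congr 1
    · apply congrArg; funext x; rw [hAupd]
    · rw [hBupd]]
  rw [avg_prod]
  apply congrArg
  funext h
  show avg Z (fun z => (avg Z fun x => A x h) * B z h) = _
  rw [avg_mul_left]

end GipDef
section GCS
variable {Z : Type*} [AddCommGroup Z] [Fintype Z] {ι : Type*} [Fintype ι] [DecidableEq ι]

lemma avg_cs {α : Type*} [Fintype α] (a b : α → ℝ) :
    (avg α (fun x => a x * b x))^2 ≤ avg α (fun x => a x ^ 2) * avg α (fun x => b x ^ 2) := by
  have := avg_weighted_cs (fun _ => 1) a b (by intro x; norm_num)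
  simpa using this

lemma prod_filter_flip {M : Type*} [CommMonoid M] (i : ι) (b : Bool) (F : (ι → Bool) → M) :
    ∏ ω ∈ Finset.univ.filter (fun ω : ι → Bool => ω i = !b), F (Function.update ω i b)
      = ∏ ω ∈ Finset.univ.filter (fun ω : ι → Bool => ω i = b), F ω := by
  apply Finset.prod_nbij' (fun ω => Function.update ω i b) (fun ω => Function.update ω i !b)
  · intro ω hω
    simp only [Finset.mem_filter, Finset.mem_univ, true_and] at hω ⊢
    simp
  · intro ω hω
    simp only [Finset.mem_filter, Finset.mem_univ, true_and] at hω ⊢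
    simp
  · intro ω hω
    simp only [Finset.mem_filter, Finset.mem_univ, true_and] at hω
    rw [Function.update_idem, ← hω, Function.update_eq_self]
  · intro ω hω
    simp only [Finset.mem_filter, Finset.mem_univ, true_and] at hω
    rw [Function.update_idem, ← hω, Function.update_eq_self]
  · intro ω _
    rfl

variable [Nonempty Z]

lemma gip_cs_dir (g : (ι → Bool) → Z → ℝ) (i : ι) :
    (gip ι Z g)^2 ≤ gip ι Z (fun ω => g (Function.update ω i false)) *
      gip ι Z (fun ω => g (Function.update ω i true)) := by
  classical
  rw [gip_split g i, gip_split (fun ω => g (Function.update ω i false)) i,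
    gip_split (fun ω => g (Function.update ω i true)) i]
  set X : (ι → Z) → ℝ := fun h => avg Z fun x =>
    ∏ ω ∈ Finset.univ.filter (fun ω : ι → Bool => ω i = false),
      g ω (x + lsum ω (Function.update h i 0)) with hX
  set Y : (ι → Z) → ℝ := fun h => avg Z fun z =>
    ∏ ω ∈ Finset.univ.filter (fun ω : ι → Bool => ω i = true),
      g ω (z + lsum ω (Function.update h i 0)) with hY
  have keyF : ∀ (h : ι → Z) (z : Z) (b : Bool),
      (∏ ω ∈ Finset.univ.filter (fun ω : ι → Bool => ω i = !b),
        g (Function.update ω i b) (z + lsum ω (Function.update h i 0)))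
      = ∏ ω ∈ Finset.univ.filter (fun ω : ι → Bool => ω i = b),
          g ω (z + lsum ω (Function.update h i 0)) := by
    intro h z b
    rw [show (∏ ω ∈ Finset.univ.filter (fun ω : ι → Bool => ω i = !b),
        g (Function.update ω i b) (z + lsum ω (Function.update h i 0)))
        = ∏ ω ∈ Finset.univ.filter (fun ω : ι → Bool => ω i = !b),
            g (Function.update ω i b) (z + lsum (Function.update ω i b) (Function.update h i 0))
      from Finset.prod_congr rfl fun ω _ => by
        rw [lsum_congr_update ω i b _ (Function.update_self i 0 h)]]
    exact prod_filter_flip i b (fun ω => g ω (z + lsum ω (Function.update h i 0)))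
  have keyid : ∀ (h : ι → Z) (z : Z) (b c : Bool),
      (∏ ω ∈ Finset.univ.filter (fun ω : ι → Bool => ω i = b),
        g (Function.update ω i b) (z + lsum ω (Function.update h i 0)))
      = ∏ ω ∈ Finset.univ.filter (fun ω : ι → Bool => ω i = b),
          g ω (z + lsum ω (Function.update h i 0)) := by
    intro h z b _
    apply Finset.prod_congr rfl
    intro ω hω
    simp only [Finset.mem_filter, Finset.mem_univ, true_and] at hω
    rw [show Function.update ω i b = ω from by rw [← hω, Function.update_eq_self]]
  have e1 : (fun h => (avg Z fun x =>
      ∏ ω ∈ Finset.univ.filter (fun ω : ι → Bool => ω i = false),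
        g (Function.update ω i false) (x + lsum ω (Function.update h i 0))) *
      (avg Z fun z => ∏ ω ∈ Finset.univ.filter (fun ω : ι → Bool => ω i = true),
        g (Function.update ω i false) (z + lsum ω (Function.update h i 0))))
      = fun h => X h * X h := by
    funext h
    congr 1
    · exact congrArg (avg Z) (funext fun x => keyid h x false false)
    · exact congrArg (avg Z) (funext fun z => keyF h z false)
  have e2 : (fun h => (avg Z fun x =>
      ∏ ω ∈ Finset.univ.filter (fun ω : ι → Bool => ω i = false),
        g (Function.update ω i true) (x + lsum ω (Function.update h i 0))) *
      (avg Z fun z => ∏ ω ∈ Finset.univ.filter (fun ω : ι → Bool => ω i = true),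
        g (Function.update ω i true) (z + lsum ω (Function.update h i 0))))
      = fun h => Y h * Y h := by
    funext h
    congr 1
    · exact congrArg (avg Z) (funext fun x => keyF h x true)
    · exact congrArg (avg Z) (funext fun z => keyid h z true true)
  rw [e1, e2]
  calc (avg (ι → Z) fun h => X h * Y h) ^ 2
      ≤ avg (ι → Z) (fun h => X h ^ 2) * avg (ι → Z) (fun h => Y h ^ 2) := avg_cs X Y
    _ = avg (ι → Z) (fun h => X h * X h) * avg (ι → Z) (fun h => Y h * Y h) := by
        congr 1
        · exact congrArg (avg _) (funext fun h => sq (X h))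
        · exact congrArg (avg _) (funext fun h => sq (Y h))

lemma gip_const_nonneg [Nonempty ι] (f : Z → ℝ) : 0 ≤ gip ι Z (fun _ => f) := by
  classical
  obtain ⟨i⟩ := (inferInstance : Nonempty ι)
  rw [gip_split (fun _ => f) i]
  apply avg_nonneg'
  intro h
  have : (avg Z fun z => ∏ ω ∈ Finset.univ.filter (fun ω : ι → Bool => ω i = true),
        f (z + lsum ω (Function.update h i 0)))
      = avg Z fun x => ∏ ω ∈ Finset.univ.filter (fun ω : ι → Bool => ω i = false),
        f (x + lsum ω (Function.update h i 0)) := by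
    apply congrArg
    funext z
    rw [← prod_filter_flip i false (fun ω => f (z + lsum ω (Function.update h i 0)))]
    apply Finset.prod_congr rfl
    intro ω _
    rw [lsum_congr_update ω i false _ (Function.update_self i 0 h)]
  rw [this]
  exact mul_self_nonneg _

lemma prod_filt_insert {M : Type*} [CommMonoid M] (J : Finset ι) (a : ι) (ha : a ∉ J)
    (F : (ι → Bool) → M) :
    ∏ ε ∈ Finset.univ.filter (fun ε : ι → Bool => ∀ j ∉ insert a J, ε j = false), F ε
      = ∏ ε ∈ Finset.univ.filter (fun ε : ι → Bool => ∀ j ∉ J, ε j = false),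
          (F (Function.update ε a false) * F (Function.update ε a true)) := by
  have step : ∏ ε ∈ Finset.univ.filter (fun ε : ι → Bool => ∀ j ∉ insert a J, ε j = false), F ε
      = ∏ p ∈ (Finset.univ.filter (fun ε : ι → Bool => ∀ j ∉ J, ε j = false)) ×ˢ
          (Finset.univ : Finset Bool), F (Function.update p.1 a p.2) := by
    apply Finset.prod_nbij' (fun ε => (Function.update ε a false, ε a))
      (fun p => Function.update p.1 a p.2)
    · intro ε hε
      simp only [Finset.mem_filter, Finset.mem_univ, true_and, Finset.mem_product] at hε ⊢
      refine ⟨fun j hj => ?_, trivial⟩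
      rcases eq_or_ne j a with rfl | hja
      · simp
      · rw [Function.update_of_ne hja]
        exact hε j (by simp [hja, hj])
    · intro p hp
      simp only [Finset.mem_filter, Finset.mem_univ, true_and, Finset.mem_product] at hp ⊢
      intro j hj
      have hja : j ≠ a := fun h => hj (h ▸ Finset.mem_insert_self a J)
      rw [Function.update_of_ne hja]
      exact hp.1 j (fun hjJ => hj (Finset.mem_insert_of_mem hjJ))
    · intro ε hε
      simp only []
      rw [Function.update_idem, Function.update_eq_self]
    · intro p hp
      simp only [Finset.mem_filter, Finset.mem_univ, true_and, Finset.mem_product] at hp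
      have : p.1 a = false := hp.1 a ha
      ext : 1
      · simp only [Function.update_idem]
        rw [show Function.update p.1 a false = p.1 from by rw [← this, Function.update_eq_self]]
      · simp
    · intro ε hε
      simp only []
      rw [Function.update_idem, Function.update_eq_self]
  rw [step, Finset.prod_product]
  apply Finset.prod_congr rfl
  intro ε _
  rw [Fintype.prod_bool, mul_comm]

lemma gcs_aux (g : (ι → Bool) → Z → ℝ) (J : Finset ι) :
    |gip ι Z g| ^ (2 ^ J.card) ≤
      ∏ ε ∈ Finset.univ.filter (fun ε : ι → Bool => ∀ j ∉ J, ε j = false),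
        |gip ι Z (fun ω => g (fun j => if j ∈ J then ε j else ω j))| := by
  classical
  induction J using Finset.induction with
  | empty =>
      rw [show Finset.univ.filter (fun ε : ι → Bool => ∀ j ∉ (∅ : Finset ι), ε j = false)
          = {fun _ => false} from by
        ext ε
        simp [funext_iff]]
      rw [Finset.prod_singleton]
      rw [show (fun ω => g (fun j => if j ∈ (∅ : Finset ι) then false else ω j)) = g from by
        funext ω; congr 1]
      simp
  | @insert a J ha IH =>
      rw [Finset.card_insert_of_notMem ha, pow_succ, pow_mul]
      calc (|gip ι Z g| ^ 2 ^ J.card) ^ 2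
          ≤ (∏ ε ∈ Finset.univ.filter (fun ε : ι → Bool => ∀ j ∉ J, ε j = false),
              |gip ι Z (fun ω => g (fun j => if j ∈ J then ε j else ω j))|) ^ 2 := by
            apply pow_le_pow_left₀ (by positivity) IH
        _ = ∏ ε ∈ Finset.univ.filter (fun ε : ι → Bool => ∀ j ∉ J, ε j = false),
              |gip ι Z (fun ω => g (fun j => if j ∈ J then ε j else ω j))| ^ 2 := by
            rw [← Finset.prod_pow]
        _ ≤ ∏ ε ∈ Finset.univ.filter (fun ε : ι → Bool => ∀ j ∉ J, ε j = false),
              (|gip ι Z (fun ω => g (fun j => if j ∈ insert a J then (Function.update ε a false) j else ω j))| *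
               |gip ι Z (fun ω => g (fun j => if j ∈ insert a J then (Function.update ε a true) j else ω j))|) := by
            apply Finset.prod_le_prod
            · intro ε _; positivity
            · intro ε _
              rw [sq_abs]
              have hfam : ∀ b : Bool, (fun ω => g (fun j => if j ∈ J then ε j else (Function.update ω a b) j))
                  = fun ω => g (fun j => if j ∈ insert a J then (Function.update ε a b) j else ω j) := by
                intro b
                funext ω
                have harg : (fun j => if j ∈ J then ε j else Function.update ω a b j)
                    = (fun j => if j ∈ insert a J then Function.update ε a b j else ω j) := by
                  funext j
                  rcases eq_or_ne j a with rfl | hja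
                  · simp [ha]
                  · by_cases hjJ : j ∈ J
                    · simp [hjJ, Finset.mem_insert, hja, Function.update_of_ne hja]
                    · simp [hjJ, Finset.mem_insert, hja, Function.update_of_ne hja]
                rw [harg]
              calc (gip ι Z (fun ω => g (fun j => if j ∈ J then ε j else ω j))) ^ 2
                  ≤ gip ι Z (fun ω => g (fun j => if j ∈ J then ε j else (Function.update ω a false) j)) *
                    gip ι Z (fun ω => g (fun j => if j ∈ J then ε j else (Function.update ω a true) j)) := by
                    exact gip_cs_dir _ a
                _ ≤ _ := by
                    rw [hfam false, hfam true]
                    calc gip ι Z _ * gip ι Z _ ≤ |gip ι Z _ * gip ι Z _| := le_abs_self _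
                      _ = _ := abs_mul _ _
        _ = _ := (prod_filt_insert J a ha
              (fun ε' => |gip ι Z (fun ω => g (fun j => if j ∈ insert a J then ε' j else ω j))|)).symm

lemma gcs [Nonempty ι] (g : (ι → Bool) → Z → ℝ) :
    |gip ι Z g| ^ (2 ^ Fintype.card ι) ≤ ∏ ε : ι → Bool, gip ι Z (fun _ => g ε) := by
  classical
  have h := gcs_aux g Finset.univ
  rw [show Finset.univ.filter (fun ε : ι → Bool => ∀ j ∉ (Finset.univ : Finset ι), ε j = false)
      = Finset.univ from by ext ε; simp] at h
  rw [show (Finset.univ : Finset ι).card = Fintype.card ι from rfl] at h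
  refine h.trans (le_of_eq ?_)
  apply Finset.prod_congr rfl
  intro ε _
  have hconst : (fun ω : ι → Bool => g (fun j => if j ∈ (Finset.univ : Finset ι) then ε j else ω j))
      = fun _ => g ε := by
    funext ω
    have : (fun j => if j ∈ (Finset.univ : Finset ι) then ε j else ω j) = ε := by
      funext j; simp
    rw [this]
  rw [hconst]
  exact abs_of_nonneg (gip_const_nonneg _)

end GCS
section Fiber
variable {Z : Type*} [AddCommGroup Z] [Fintype Z] {ι : Type*} [Fintype ι] [DecidableEq ι]

lemma abs_gip_le {g G : (ι → Bool) → Z → ℝ} (h : ∀ ω x, |g ω x| ≤ G ω x) :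
    |gip ι Z g| ≤ gip ι Z G := by
  refine (abs_avg_le).trans (avg_mono ?_)
  intro xh
  calc |∏ ω : ι → Bool, g ω (xh.1 + lsum ω xh.2)|
      = ∏ ω : ι → Bool, |g ω (xh.1 + lsum ω xh.2)| := by rw [Finset.abs_prod]
    _ ≤ ∏ ω : ι → Bool, G ω (xh.1 + lsum ω xh.2) := by
        apply Finset.prod_le_prod
        · intro ω _; exact abs_nonneg _
        · intro ω _; exact h ω _

variable [Nonempty Z]

lemma gip_const_one : gip ι Z (fun _ => fun _ => (1:ℝ)) = 1 := by
  unfold gip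
  rw [show (fun xh : Z × (ι → Z) => ∏ _ω : ι → Bool, (1:ℝ)) = fun _ => (1:ℝ) from by
    funext xh; rw [Finset.prod_const_one]]
  exact avg_one

/-- the dual / fiber function at position ω₀ -/
noncomputable def gdual (g : (ι → Bool) → Z → ℝ) (ω₀ : ι → Bool) (y : Z) : ℝ :=
  avg (ι → Z) fun h => ∏ ω ∈ Finset.univ.erase ω₀, g ω (y + (lsum ω h - lsum ω₀ h))

lemma gdual_update (g : (ι → Bool) → Z → ℝ) (ω₀ : ι → Bool) (φ : Z → ℝ) :
    gdual (Function.update g ω₀ φ) ω₀ = gdual g ω₀ := by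
  funext y
  unfold gdual
  apply congrArg
  funext h
  apply Finset.prod_congr rfl
  intro ω hω
  rw [Function.update_of_ne (Finset.ne_of_mem_erase hω)]

lemma abs_gdual_le {g B : (ι → Bool) → Z → ℝ} (ω₀ : ι → Bool)
    (h : ∀ ω, ω ≠ ω₀ → ∀ x, |g ω x| ≤ B ω x) (y : Z) :
    |gdual g ω₀ y| ≤ gdual B ω₀ y := by
  refine (abs_avg_le).trans (avg_mono ?_)
  intro hh
  calc |∏ ω ∈ Finset.univ.erase ω₀, g ω (y + (lsum ω hh - lsum ω₀ hh))|
      = ∏ ω ∈ Finset.univ.erase ω₀, |g ω (y + (lsum ω hh - lsum ω₀ hh))| := by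
        rw [Finset.abs_prod]
    _ ≤ _ := by
        apply Finset.prod_le_prod
        · intro ω _; exact abs_nonneg _
        · intro ω hω; exact h ω (Finset.ne_of_mem_erase hω) _

lemma gdual_nonneg {B : (ι → Bool) → Z → ℝ} (ω₀ : ι → Bool)
    (h : ∀ ω x, 0 ≤ B ω x) (y : Z) : 0 ≤ gdual B ω₀ y := by
  apply avg_nonneg'
  intro hh
  apply Finset.prod_nonneg
  intro ω _
  exact h ω _

lemma gip_fiber (g : (ι → Bool) → Z → ℝ) (ω₀ : ι → Bool) :
    gip ι Z g = avg Z (fun y => g ω₀ y * gdual g ω₀ y) := by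
  classical
  have step1 : gip ι Z g = avg (Z × (ι → Z)) (fun xh =>
      g ω₀ (xh.1 + lsum ω₀ xh.2) * ∏ ω ∈ Finset.univ.erase ω₀, g ω (xh.1 + lsum ω xh.2)) := by
    unfold gip
    apply congrArg
    funext xh
    exact (Finset.mul_prod_erase Finset.univ
      (fun ω => g ω (xh.1 + lsum ω xh.2)) (Finset.mem_univ ω₀)).symm
  have step2 : gip ι Z g = avg (Z × (ι → Z)) (fun yh =>
      g ω₀ yh.1 * ∏ ω ∈ Finset.univ.erase ω₀, g ω (yh.1 + (lsum ω yh.2 - lsum ω₀ yh.2))) := by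
    rw [step1, ← avg_comp_equiv
      (⟨fun xh => (xh.1 + lsum ω₀ xh.2, xh.2),
        fun yh => (yh.1 - lsum ω₀ yh.2, yh.2),
        by rintro ⟨x, h⟩; simp,
        by rintro ⟨y, h⟩; simp⟩ :
        (Z × (ι → Z)) ≃ (Z × (ι → Z)))
      (fun yh => g ω₀ yh.1 * ∏ ω ∈ Finset.univ.erase ω₀,
        g ω (yh.1 + (lsum ω yh.2 - lsum ω₀ yh.2)))]
    apply congrArg
    funext xh
    simp only [Equiv.coe_fn_mk]
    congr 1
    apply Finset.prod_congr rfl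
    intro ω _
    congr 1
    abel
  rw [step2, avg_prod]
  apply congrArg
  funext y
  exact avg_mul_left (g ω₀ y)
    (fun h => ∏ ω ∈ Finset.univ.erase ω₀, g ω (y + (lsum ω h - lsum ω₀ h)))

lemma gip_reindex {κ : Type*} [Fintype κ] [DecidableEq κ] (e : ι ≃ κ)
    (g : (κ → Bool) → Z → ℝ) :
    gip κ Z g = gip ι Z (fun ω => g (fun k => ω (e.symm k))) := by
  classical
  unfold gip
  rw [← avg_comp_equiv (Equiv.prodCongr (Equiv.refl Z) (Equiv.arrowCongr e (Equiv.refl Z)))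
    (fun xh : Z × (κ → Z) => ∏ ω : κ → Bool, g ω (xh.1 + lsum ω xh.2))]
  apply congrArg
  funext xh
  show (∏ ω : κ → Bool, g ω (xh.1 + lsum ω fun k => xh.2 (e.symm k)))
      = ∏ ω : ι → Bool, g (fun k => ω (e.symm k)) (xh.1 + lsum ω xh.2)
  rw [← Equiv.prod_comp (Equiv.arrowCongr e (Equiv.refl Bool))
    (fun ω : κ → Bool => g ω (xh.1 + lsum ω fun k => xh.2 (e.symm k)))]
  apply Finset.prod_congr rfl
  intro ω _
  show g (fun k => ω (e.symm k)) _ = _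
  congr 2
  show lsum (fun k => ω (e.symm k)) (fun k => xh.2 (e.symm k)) = lsum ω xh.2
  unfold lsum
  exact Equiv.sum_comp e.symm (fun i => if ω i then xh.2 i else 0)

end Fiber
section Pair
variable {Z : Type*} [AddCommGroup Z] [Fintype Z] {ι : Type*} [Fintype ι] [DecidableEq ι]

/-- pair family: `c` at `(ω₀,ω₀)`, `A α` at `(α,ω₀)`, `B β` at `(ω₀,β)`, and `1` elsewhere -/
noncomputable def pfam (ω₀ : ι → Bool) (c : Z → ℝ) (A B : (ι → Bool) → Z → ℝ) :
    ((ι ⊕ ι) → Bool) → Z → ℝ := fun τ =>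
  if (fun i => τ (Sum.inr i)) = ω₀ then
    (if (fun i => τ (Sum.inl i)) = ω₀ then c else A (fun i => τ (Sum.inl i)))
  else
    (if (fun i => τ (Sum.inl i)) = ω₀ then B (fun i => τ (Sum.inr i)) else fun _ => 1)

lemma pfam_mem (ω₀ : ι → Bool) (c : Z → ℝ) (A B : (ι → Bool) → Z → ℝ)
    {P : (Z → ℝ) → Prop} (hc : P c) (hA : ∀ ω, P (A ω)) (hB : ∀ ω, P (B ω))
    (h1 : P (fun _ => 1)) : ∀ τ, P (pfam ω₀ c A B τ) := by
  intro τ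
  unfold pfam
  split_ifs <;> first | exact hc | exact hA _ | exact hB _ | exact h1

lemma lsum_sum (τ : (ι ⊕ ι) → Bool) (H : (ι ⊕ ι) → Z) :
    lsum τ H = lsum (fun i => τ (Sum.inl i)) (fun i => H (Sum.inl i))
      + lsum (fun i => τ (Sum.inr i)) (fun i => H (Sum.inr i)) := by
  unfold lsum
  rw [Fintype.sum_sum_type]

variable [Nonempty Z]

lemma gip_pfam (ω₀ : ι → Bool) (c : Z → ℝ) (A B : (ι → Bool) → Z → ℝ) :
    gip (ι ⊕ ι) Z (pfam ω₀ c A B)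
      = avg Z (fun y => c y * (gdual A ω₀ y * gdual B ω₀ y)) := by
  classical
  have key : ∀ (x : Z) (H : (ι ⊕ ι) → Z),
      (∏ τ : (ι ⊕ ι) → Bool, pfam ω₀ c A B τ (x + lsum τ H))
      = (c (x + (lsum ω₀ (fun i => H (Sum.inl i)) + lsum ω₀ (fun i => H (Sum.inr i)))) *
          ∏ β ∈ Finset.univ.erase ω₀,
            B β (x + (lsum ω₀ (fun i => H (Sum.inl i)) + lsum β (fun i => H (Sum.inr i))))) *
        ∏ α ∈ Finset.univ.erase ω₀,
          A α (x + (lsum α (fun i => H (Sum.inl i)) + lsum ω₀ (fun i => H (Sum.inr i)))) := by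
    intro x H
    set h1 : ι → Z := fun i => H (Sum.inl i)
    set h2 : ι → Z := fun i => H (Sum.inr i)
    rw [← Equiv.prod_comp (Equiv.sumArrowEquivProdArrow ι ι Bool).symm
      (fun τ => pfam ω₀ c A B τ (x + lsum τ H))]
    rw [Fintype.prod_prod_type]
    have hval : ∀ (α β : ι → Bool),
        pfam ω₀ c A B ((Equiv.sumArrowEquivProdArrow ι ι Bool).symm (α, β))
          (x + lsum ((Equiv.sumArrowEquivProdArrow ι ι Bool).symm (α, β)) H)
        = (if β = ω₀ then (if α = ω₀ then c else A α) else
            (if α = ω₀ then B β else fun _ => (1:ℝ)))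
            (x + (lsum α h1 + lsum β h2)) := by
      intro α β
      have hτ : ((Equiv.sumArrowEquivProdArrow ι ι Bool).symm (α, β)) = Sum.elim α β := rfl
      rw [hτ]
      have hα : (fun i => Sum.elim α β (Sum.inl i)) = α := rfl
      have hβ : (fun i => Sum.elim α β (Sum.inr i)) = β := rfl
      have harg : lsum (Sum.elim α β) H = lsum α h1 + lsum β h2 := by
        rw [lsum_sum]
        rfl
      rw [harg]
      unfold pfam
      rw [hα, hβ]
    rw [show (∏ α : ι → Bool, ∏ β : ι → Bool,
        pfam ω₀ c A B ((Equiv.sumArrowEquivProdArrow ι ι Bool).symm (α, β))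
          (x + lsum ((Equiv.sumArrowEquivProdArrow ι ι Bool).symm (α, β)) H))
        = ∏ α : ι → Bool, ∏ β : ι → Bool,
            (if β = ω₀ then (if α = ω₀ then c else A α) else
              (if α = ω₀ then B β else fun _ => (1:ℝ)))
              (x + (lsum α h1 + lsum β h2)) from
      Finset.prod_congr rfl fun α _ => Finset.prod_congr rfl fun β _ => hval α β]
    -- evaluate inner products
    have inner_ne : ∀ α : ι → Bool, α ≠ ω₀ →
        (∏ β : ι → Bool, (if β = ω₀ then (if α = ω₀ then c else A α) else
          (if α = ω₀ then B β else fun _ => (1:ℝ))) (x + (lsum α h1 + lsum β h2)))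
        = A α (x + (lsum α h1 + lsum ω₀ h2)) := by
      intro α hα
      rw [Finset.prod_eq_single ω₀]
      · rw [if_pos rfl, if_neg hα]
      · intro β _ hβ
        rw [if_neg hβ, if_neg hα]
      · intro hmem; exact absurd (Finset.mem_univ ω₀) hmem
    have inner_eq :
        (∏ β : ι → Bool, (if β = ω₀ then (if (ω₀ : ι → Bool) = ω₀ then c else A ω₀) else
          (if (ω₀ : ι → Bool) = ω₀ then B β else fun _ => (1:ℝ))) (x + (lsum ω₀ h1 + lsum β h2)))
        = c (x + (lsum ω₀ h1 + lsum ω₀ h2)) *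
            ∏ β ∈ Finset.univ.erase ω₀, B β (x + (lsum ω₀ h1 + lsum β h2)) := by
      rw [← Finset.mul_prod_erase Finset.univ _ (Finset.mem_univ ω₀)]
      rw [if_pos rfl, if_pos rfl]
      congr 1
      apply Finset.prod_congr rfl
      intro β hβ
      rw [if_neg (Finset.ne_of_mem_erase hβ), if_pos rfl]
    rw [← Finset.mul_prod_erase Finset.univ _ (Finset.mem_univ ω₀)]
    rw [inner_eq]
    congr 1
    apply Finset.prod_congr rfl
    intro α hα
    exact inner_ne α (Finset.ne_of_mem_erase hα)
  -- rewrite the integrand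
  unfold gip
  rw [show (fun xh : Z × ((ι ⊕ ι) → Z) =>
      ∏ τ : (ι ⊕ ι) → Bool, pfam ω₀ c A B τ (xh.1 + lsum τ xh.2))
      = fun xh =>
        (c (xh.1 + (lsum ω₀ (fun i => xh.2 (Sum.inl i)) + lsum ω₀ (fun i => xh.2 (Sum.inr i)))) *
          ∏ β ∈ Finset.univ.erase ω₀,
            B β (xh.1 + (lsum ω₀ (fun i => xh.2 (Sum.inl i)) + lsum β (fun i => xh.2 (Sum.inr i))))) *
        ∏ α ∈ Finset.univ.erase ω₀,
          A α (xh.1 + (lsum α (fun i => xh.2 (Sum.inl i)) + lsum ω₀ (fun i => xh.2 (Sum.inr i)))) from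
    funext fun xh => key xh.1 xh.2]
  -- change of variables
  have step2 : avg (Z × ((ι ⊕ ι) → Z)) (fun xh =>
      (c (xh.1 + (lsum ω₀ (fun i => xh.2 (Sum.inl i)) + lsum ω₀ (fun i => xh.2 (Sum.inr i)))) *
        ∏ β ∈ Finset.univ.erase ω₀,
          B β (xh.1 + (lsum ω₀ (fun i => xh.2 (Sum.inl i)) + lsum β (fun i => xh.2 (Sum.inr i))))) *
      ∏ α ∈ Finset.univ.erase ω₀,
        A α (xh.1 + (lsum α (fun i => xh.2 (Sum.inl i)) + lsum ω₀ (fun i => xh.2 (Sum.inr i)))))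
      = avg (Z × ((ι ⊕ ι) → Z)) (fun yh =>
      (c yh.1 * ∏ β ∈ Finset.univ.erase ω₀,
        B β (yh.1 + (lsum β (fun i => yh.2 (Sum.inr i)) - lsum ω₀ (fun i => yh.2 (Sum.inr i))))) *
      ∏ α ∈ Finset.univ.erase ω₀,
        A α (yh.1 + (lsum α (fun i => yh.2 (Sum.inl i)) - lsum ω₀ (fun i => yh.2 (Sum.inl i))))) := by
    rw [← avg_comp_equiv
      (⟨fun xh : Z × ((ι ⊕ ι) → Z) =>
          (xh.1 + (lsum ω₀ (fun i => xh.2 (Sum.inl i)) + lsum ω₀ (fun i => xh.2 (Sum.inr i))), xh.2),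
        fun xh =>
          (xh.1 - (lsum ω₀ (fun i => xh.2 (Sum.inl i)) + lsum ω₀ (fun i => xh.2 (Sum.inr i))), xh.2),
        by rintro ⟨x, H⟩; simp,
        by rintro ⟨x, H⟩; simp⟩ :
        (Z × ((ι ⊕ ι) → Z)) ≃ (Z × ((ι ⊕ ι) → Z)))
      (fun yh : Z × ((ι ⊕ ι) → Z) =>
        (c yh.1 * ∏ β ∈ Finset.univ.erase ω₀,
          B β (yh.1 + (lsum β (fun i => yh.2 (Sum.inr i)) - lsum ω₀ (fun i => yh.2 (Sum.inr i))))) *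
        ∏ α ∈ Finset.univ.erase ω₀,
          A α (yh.1 + (lsum α (fun i => yh.2 (Sum.inl i)) - lsum ω₀ (fun i => yh.2 (Sum.inl i)))))]
    apply congrArg
    funext xh
    simp only [Equiv.coe_fn_mk]
    congr 1
    · congr 1
      apply Finset.prod_congr rfl
      intro β _
      congr 1
      abel
    · apply Finset.prod_congr rfl
      intro α _
      congr 1
      abel
  rw [step2]
  -- Fubini and factorization
  rw [avg_prod]
  apply congrArg
  funext y
  rw [show (fun H : (ι ⊕ ι) → Z =>
      (c y * ∏ β ∈ Finset.univ.erase ω₀,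
        B β (y + (lsum β (fun i => H (Sum.inr i)) - lsum ω₀ (fun i => H (Sum.inr i))))) *
      ∏ α ∈ Finset.univ.erase ω₀,
        A α (y + (lsum α (fun i => H (Sum.inl i)) - lsum ω₀ (fun i => H (Sum.inl i)))))
      = fun H => c y *
        ((fun hh : ι → Z => ∏ α ∈ Finset.univ.erase ω₀,
          A α (y + (lsum α hh - lsum ω₀ hh))) (fun i => H (Sum.inl i)) *
        (fun hh : ι → Z => ∏ β ∈ Finset.univ.erase ω₀,
          B β (y + (lsum β hh - lsum ω₀ hh))) (fun i => H (Sum.inr i))) from by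
    funext H
    ring]
  rw [avg_mul_left]
  congr 1
  rw [← avg_comp_equiv (Equiv.sumArrowEquivProdArrow ι ι Z).symm]
  rw [show (fun p : (ι → Z) × (ι → Z) =>
      ((fun hh : ι → Z => ∏ α ∈ Finset.univ.erase ω₀, A α (y + (lsum α hh - lsum ω₀ hh)))
        (fun i => ((Equiv.sumArrowEquivProdArrow ι ι Z).symm p) (Sum.inl i)) *
       (fun hh : ι → Z => ∏ β ∈ Finset.univ.erase ω₀, B β (y + (lsum β hh - lsum ω₀ hh)))
        (fun i => ((Equiv.sumArrowEquivProdArrow ι ι Z).symm p) (Sum.inr i))))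
      = fun p =>
        (fun hh : ι → Z => ∏ α ∈ Finset.univ.erase ω₀, A α (y + (lsum α hh - lsum ω₀ hh))) p.1 *
        (fun hh : ι → Z => ∏ β ∈ Finset.univ.erase ω₀, B β (y + (lsum β hh - lsum ω₀ hh))) p.2 from by
    funext p
    rfl]
  exact avg_prod_mul
    (fun hh : ι → Z => ∏ α ∈ Finset.univ.erase ω₀, A α (y + (lsum α hh - lsum ω₀ hh)))
    (fun hh : ι → Z => ∏ β ∈ Finset.univ.erase ω₀, B β (y + (lsum β hh - lsum ω₀ hh)))
end Pair
section Count
variable {Z : Type*} [AddCommGroup Z] [Fintype Z] [Nonempty Z]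
  {κ : Type*} [Fintype κ] [DecidableEq κ] [Nonempty κ]

lemma gip_const_zero : gip κ Z (fun _ => fun _ => (0:ℝ)) = 0 := by
  unfold gip
  rw [show (fun xh : Z × (κ → Z) => ∏ _ω : κ → Bool, (0:ℝ)) = fun _ => (0:ℝ) from by
    funext xh
    rw [Finset.prod_const]
    exact zero_pow (by
      rw [Finset.card_univ]
      exact Fintype.card_ne_zero)]
  exact avg_const 0

lemma gip_const_le_of_abs_le {c B : Z → ℝ} (h : ∀ x, |c x| ≤ B x) :
    gip κ Z (fun _ => c) ≤ gip κ Z (fun _ => B) :=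
  le_trans (le_abs_self _) (abs_gip_le (fun _ x => h x))

variable {ν : Z → ℝ} {η : ℝ}

/-- bound for a family whose entries are `ν - 1` (or `0`) on `T` and `1` off `T` -/
lemma gip_u_one_bound (hη : 0 ≤ η)
    (hu : gip κ Z (fun _ => fun x => ν x - 1) ≤ η ^ (2 ^ Fintype.card κ))
    (T : Finset (κ → Bool)) (F : (κ → Bool) → Z → ℝ)
    (hFin : ∀ τ ∈ T, F τ = (fun x => ν x - 1) ∨ F τ = fun _ => 0)
    (hFout : ∀ τ ∉ T, F τ = fun _ => (1:ℝ)) :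
    |gip κ Z F| ≤ η ^ T.card := by
  classical
  have h := gcs (Z := Z) F
  have hprod : (∏ ε : κ → Bool, gip κ Z (fun _ => F ε)) ≤
      ∏ ε : κ → Bool, (if ε ∈ T then η ^ (2 ^ Fintype.card κ) else 1) := by
    apply Finset.prod_le_prod
    · intro ε _; exact gip_const_nonneg _
    · intro ε _
      by_cases hε : ε ∈ T
      · rw [if_pos hε]
        rcases hFin ε hε with h' | h'
        · rw [h']; exact hu
        · rw [h', gip_const_zero]
          positivity
      · rw [if_neg hε, hFout ε hε, gip_const_one]
  have hval : (∏ ε : κ → Bool, (if ε ∈ T then η ^ (2 ^ Fintype.card κ) else 1))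
      = (η ^ T.card) ^ (2 ^ Fintype.card κ) := by
    rw [Finset.prod_ite_mem, Finset.univ_inter, Finset.prod_const, ← pow_mul, ← pow_mul,
      mul_comm]
  rw [hval] at hprod
  have := h.trans hprod
  exact (pow_le_pow_iff_left₀ (abs_nonneg _) (by positivity) (by positivity)).mp this

/-- the main counting estimate : any pattern of `ν`'s and `1`'s averages to `1 + O(η)` -/
lemma gip_count (hν : ∀ x, 0 ≤ ν x) (hη : 0 ≤ η) (hη1 : η ≤ 1)
    (hu : gip κ Z (fun _ => fun x => ν x - 1) ≤ η ^ (2 ^ Fintype.card κ))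
    (G : (κ → Bool) → Z → ℝ) (hG : ∀ τ, G τ = ν ∨ G τ = fun _ => (1:ℝ)) :
    |gip κ Z G - 1| ≤ (2 ^ (2 ^ Fintype.card κ) : ℝ) * η := by
  classical
  set w : (κ → Bool) → Z → ℝ := fun τ x => G τ x - 1 with hw
  have hwcases : ∀ τ, w τ = (fun x => ν x - 1) ∨ w τ = fun _ => 0 := by
    intro τ
    rcases hG τ with h' | h'
    · left; funext x; simp [hw, h']
    · right; funext x; simp [hw, h']
  have hexp : gip κ Z G = ∑ T ∈ (Finset.univ : Finset (κ → Bool)).powerset,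
      gip κ Z (fun τ => if τ ∈ T then w τ else fun _ => 1) := by
    unfold gip
    rw [← avg_sum]
    apply congrArg
    funext xh
    have : (∏ τ : κ → Bool, G τ (xh.1 + lsum τ xh.2))
        = ∏ τ : κ → Bool, (w τ (xh.1 + lsum τ xh.2) + 1) := by
      apply Finset.prod_congr rfl
      intro τ _
      simp [hw]
    rw [this, Finset.prod_add]
    apply Finset.sum_congr rfl
    intro T _
    rw [Finset.prod_const_one, mul_one]
    rw [show (∏ τ : κ → Bool, (if τ ∈ T then w τ else fun _ => (1:ℝ)) (xh.1 + lsum τ xh.2))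
        = ∏ τ ∈ Finset.univ ∩ T, w τ (xh.1 + lsum τ xh.2) from by
      rw [← Finset.prod_ite_mem]
      apply Finset.prod_congr rfl
      intro τ _
      by_cases hτ : τ ∈ T <;> simp [hτ]]
    rw [Finset.univ_inter]
  have hempty : gip κ Z (fun τ => if τ ∈ (∅ : Finset (κ → Bool)) then w τ else fun _ => 1) = 1 := by
    rw [show (fun τ => if τ ∈ (∅ : Finset (κ → Bool)) then w τ else fun _ => (1:ℝ))
        = fun _ => fun _ => (1:ℝ) from by
      funext τ; rw [if_neg (Finset.notMem_empty τ)]]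
    exact gip_const_one
  have hsplit : gip κ Z G = 1 + ∑ T ∈ ((Finset.univ : Finset (κ → Bool)).powerset).erase ∅,
      gip κ Z (fun τ => if τ ∈ T then w τ else fun _ => 1) := by
    rw [hexp, ← Finset.add_sum_erase _ _ (Finset.empty_mem_powerset _), hempty]
  rw [hsplit, add_sub_cancel_left]
  calc |∑ T ∈ ((Finset.univ : Finset (κ → Bool)).powerset).erase ∅,
        gip κ Z (fun τ => if τ ∈ T then w τ else fun _ => 1)|
      ≤ ∑ T ∈ ((Finset.univ : Finset (κ → Bool)).powerset).erase ∅,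
          |gip κ Z (fun τ => if τ ∈ T then w τ else fun _ => 1)| :=
        Finset.abs_sum_le_sum_abs _ _
    _ ≤ ∑ _T ∈ ((Finset.univ : Finset (κ → Bool)).powerset).erase ∅, η := by
        apply Finset.sum_le_sum
        intro T hT
        have hT' : T ≠ ∅ := (Finset.mem_erase.mp hT).1
        have hb := gip_u_one_bound hη hu T (fun τ => if τ ∈ T then w τ else fun _ => 1)
          (fun τ hτ => by
            have hbeta : (fun τ' => if τ' ∈ T then w τ' else fun _ => (1:ℝ)) τ = w τ := by
              simp [hτ]
            rw [if_pos hτ]; exact hwcases τ)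
          (fun τ hτ => by simp [hτ])
        refine hb.trans ?_
        calc η ^ T.card ≤ η ^ 1 := pow_le_pow_of_le_one hη hη1
              (Nat.one_le_iff_ne_zero.mpr (by
                intro hc
                exact hT' (Finset.card_eq_zero.mp hc)))
          _ = η := pow_one η
    _ = (((Finset.univ : Finset (κ → Bool)).powerset).erase ∅).card • η := by
        rw [Finset.sum_const]
    _ ≤ (2 ^ (2 ^ Fintype.card κ) : ℝ) * η := by
        rw [nsmul_eq_mul]
        apply mul_le_mul_of_nonneg_right _ hη
        calc ((((Finset.univ : Finset (κ → Bool)).powerset).erase ∅).card : ℝ)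
            ≤ (((Finset.univ : Finset (κ → Bool)).powerset).card : ℝ) := by
              exact_mod_cast Finset.card_le_card (Finset.erase_subset _ _)
          _ = (2 ^ (2 ^ Fintype.card κ) : ℝ) := by
              rw [Finset.card_powerset, Finset.card_univ, Fintype.card_fun, Fintype.card_bool]
              push_cast
              ring

/-- bound when exactly one entry is `ν - 1` and the rest are `ν`- or `1`-bounded -/
lemma gip_single_u (hν : ∀ x, 0 ≤ ν x) (hη : 0 ≤ η)
    (hu : gip κ Z (fun _ => fun x => ν x - 1) ≤ η ^ (2 ^ Fintype.card κ))
    (hν2 : gip κ Z (fun _ => ν) ≤ 2)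
    (F : (κ → Bool) → Z → ℝ) (τ₀ : κ → Bool) (hτ₀ : F τ₀ = fun x => ν x - 1)
    (hother : ∀ τ, τ ≠ τ₀ → (∀ x, |F τ x| ≤ ν x) ∨ (∀ x, |F τ x| ≤ 1)) :
    |gip κ Z F| ≤ 2 * η := by
  classical
  have h := gcs (Z := Z) F
  have hprod : (∏ ε : κ → Bool, gip κ Z (fun _ => F ε)) ≤
      η ^ (2 ^ Fintype.card κ) * 2 ^ (2 ^ Fintype.card κ - 1) := by
    rw [← Finset.mul_prod_erase Finset.univ _ (Finset.mem_univ τ₀)]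
    have h1 : gip κ Z (fun _ => F τ₀) ≤ η ^ (2 ^ Fintype.card κ) := by
      rw [hτ₀]; exact hu
    have h2 : (∏ ε ∈ Finset.univ.erase τ₀, gip κ Z (fun _ => F ε)) ≤
        ∏ _ε ∈ Finset.univ.erase τ₀, (2:ℝ) := by
      apply Finset.prod_le_prod
      · intro ε _; exact gip_const_nonneg _
      · intro ε hε
        rcases hother ε (Finset.ne_of_mem_erase hε) with h' | h'
        · exact (gip_const_le_of_abs_le h').trans hν2
        · refine (gip_const_le_of_abs_le h').trans ?_
          rw [gip_const_one]
          norm_num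
    calc gip κ Z (fun _ => F τ₀) * ∏ ε ∈ Finset.univ.erase τ₀, gip κ Z (fun _ => F ε)
        ≤ η ^ (2 ^ Fintype.card κ) * ∏ _ε ∈ Finset.univ.erase τ₀, (2:ℝ) := by
          apply mul_le_mul h1 h2
          · apply Finset.prod_nonneg; intro ε _; exact gip_const_nonneg _
          · positivity
      _ = η ^ (2 ^ Fintype.card κ) * 2 ^ (2 ^ Fintype.card κ - 1) := by
          rw [Finset.prod_const]
          congr 1
          rw [Finset.card_erase_of_mem (Finset.mem_univ τ₀), Finset.card_univ,
            Fintype.card_fun, Fintype.card_bool]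
  have hfinal : |gip κ Z F| ^ (2 ^ Fintype.card κ) ≤ (2 * η) ^ (2 ^ Fintype.card κ) := by
    refine (h.trans hprod).trans ?_
    rw [mul_pow]
    rw [mul_comm]
    apply mul_le_mul_of_nonneg_right _ (by positivity)
    apply pow_le_pow_right₀ (by norm_num)
    exact Nat.sub_le _ _
  exact (pow_le_pow_iff_left₀ (abs_nonneg _) (by positivity) (by positivity)).mp hfinal

end Count
section Step
variable {Z : Type*} [AddCommGroup Z] [Fintype Z] [Nonempty Z]

lemma gdual_const_one {ι : Type*} [Fintype ι] [DecidableEq ι] (ω₀ : ι → Bool) :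
    gdual (Z := Z) (fun _ => fun _ => (1:ℝ)) ω₀ = fun _ => (1:ℝ) := by
  funext y
  unfold gdual
  rw [show (fun h : ι → Z => ∏ _ω ∈ Finset.univ.erase ω₀, (1:ℝ)) = fun _ => (1:ℝ) from by
    funext h; rw [Finset.prod_const_one]]
  exact avg_one

set_option maxHeartbeats 1000000 in
lemma step_lemma (s : ℕ) (hs : 2 ≤ s) (ν f : Z → ℝ) (η : ℝ)
    (hν : ∀ x, 0 ≤ ν x) (hf : ∀ x, |f x| ≤ ν x) (hη : 0 ≤ η) (hη1 : η ≤ 1)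
    (hu : gip (Fin s ⊕ Fin s) Z (fun _ => fun x => ν x - 1) ≤
      η ^ (2 ^ Fintype.card (Fin s ⊕ Fin s)))
    (hCC : (2:ℝ) ^ (2 ^ Fintype.card (Fin s ⊕ Fin s)) * η ≤ 1)
    (S : Finset (Fin s → Bool)) (ω₀ : Fin s → Bool) (hω₀S : ω₀ ∈ S)
    (g : (Fin s → Bool) → Z → ℝ) (hgS : ∀ ω ∈ S, g ω = f) (hgB : ∀ ω ∉ S, ∀ x, |g ω x| ≤ 1) :
    ∃ φ : Z → ℝ, (∀ x, |φ x| ≤ 1) ∧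
      |gip (Fin s) Z g| ≤ 8 * ((2:ℝ) ^ (2 ^ Fintype.card (Fin s ⊕ Fin s)) * η) +
        Real.sqrt (4 * |gip (Fin s) Z (Function.update g ω₀ φ)| +
          68 * ((2:ℝ) ^ (2 ^ Fintype.card (Fin s ⊕ Fin s)) * η)) := by
  classical
  haveI : Nonempty (Fin s) := ⟨⟨0, by omega⟩⟩
  set CC : ℝ := (2:ℝ) ^ (2 ^ Fintype.card (Fin s ⊕ Fin s)) with hCCdef
  have hCC1 : (1:ℝ) ≤ CC := one_le_pow₀ (by norm_num)
  set β : ℝ := CC * η with hβdef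
  have hβ0 : 0 ≤ β := mul_nonneg (by positivity) hη
  have hβ1 : β ≤ 1 := hCC
  have hηβ : η ≤ β := by
    calc η = 1 * η := (one_mul η).symm
    _ ≤ CC * η := mul_le_mul_of_nonneg_right hCC1 hη
  set u : Z → ℝ := fun x => ν x - 1 with hudef
  set D : Z → ℝ := gdual g ω₀ with hDdef
  set bnd : (Fin s → Bool) → Z → ℝ := fun ω => if ω ∈ S then ν else fun _ => 1 with hbnddef
  set Db : Z → ℝ := gdual bnd ω₀ with hDbdef
  set ind : Z → ℝ := fun y => if Db y ≤ 2 then 1 else 0 with hinddef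
  set ee : Z → ℝ := fun y => if Db y ≤ 2 then 0 else 1 with heedef
  set φ : Z → ℝ := fun y => D y * ind y / 2 with hφdef
  -- pointwise facts
  have hbnd_nonneg : ∀ (ω : Fin s → Bool) (x : Z), 0 ≤ bnd ω x := by
    intro ω x
    by_cases h : ω ∈ S
    · simp only [hbnddef, if_pos h]; exact hν x
    · simp only [hbnddef, if_neg h]; norm_num
  have hbnd_cases : ∀ ω : Fin s → Bool, bnd ω = ν ∨ bnd ω = fun _ => 1 := by
    intro ω
    by_cases h : ω ∈ S
    · left; simp [hbnddef, h]
    · right; simp [hbnddef, h]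
  have hgbnd : ∀ ω, ω ≠ ω₀ → ∀ x, |g ω x| ≤ bnd ω x := by
    intro ω _ x
    by_cases h : ω ∈ S
    · simp only [hbnddef, if_pos h]
      rw [hgS ω h]
      exact hf x
    · simp only [hbnddef, if_neg h]
      exact hgB ω h x
  have hDDb : ∀ y, |D y| ≤ Db y := fun y => abs_gdual_le ω₀ hgbnd y
  have hDbnn : ∀ y, 0 ≤ Db y := fun y => gdual_nonneg ω₀ hbnd_nonneg y
  have hind_cases : ∀ y, (ind y = 1 ∧ ee y = 0 ∧ Db y ≤ 2) ∨ (ind y = 0 ∧ ee y = 1 ∧ 2 < Db y) := by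
    intro y
    by_cases h : Db y ≤ 2
    · left; refine ⟨?_, ?_, h⟩ <;> simp [hinddef, heedef, h]
    · right; refine ⟨?_, ?_, by linarith [not_le.mp h]⟩ <;> simp [hinddef, heedef, h]
  have hφ1 : ∀ x, |φ x| ≤ 1 := by
    intro y
    rcases hind_cases y with ⟨h1, _, h3⟩ | ⟨h1, _, _⟩
    · simp only [hφdef, h1, mul_one]
      rw [abs_div]
      rw [abs_of_nonneg (by norm_num : (0:ℝ) ≤ 2)]
      have := (hDDb y).trans h3
      calc |D y| / 2 ≤ 2 / 2 := by
            apply div_le_div_nonneg_den this (by norm_num)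
        _ = 1 := by norm_num
    · simp [hφdef, h1]
  refine ⟨φ, hφ1, ?_⟩
  -- counting estimates
  have hcnt : ∀ (G : ((Fin s ⊕ Fin s) → Bool) → Z → ℝ),
      (∀ τ, G τ = ν ∨ G τ = fun _ => (1:ℝ)) → |gip (Fin s ⊕ Fin s) Z G - 1| ≤ β :=
    fun G hG => gip_count hν hη hη1 hu G hG
  have honef : ∀ τ, ((fun _ => fun _ => (1:ℝ)) : (Fin s → Bool) → Z → ℝ) τ = ν ∨
      ((fun _ => fun _ => (1:ℝ)) : (Fin s → Bool) → Z → ℝ) τ = fun _ => (1:ℝ) :=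
    fun τ => Or.inr rfl
  have hc1 : |avg Z ν - 1| ≤ β := by
    have h := hcnt (pfam ω₀ ν (fun _ => fun _ => 1) (fun _ => fun _ => 1))
      (pfam_mem (P := fun h => h = ν ∨ h = fun _ => (1:ℝ)) ω₀ ν _ _ (Or.inl rfl) honef honef (Or.inr rfl))
    rw [gip_pfam, gdual_const_one] at h
    rw [show (fun y => ν y * ((1:ℝ) * (1:ℝ))) = ν from funext fun y => by ring] at h
    exact h
  have hc2 : |avg Z (fun y => ν y * Db y) - 1| ≤ β := by
    have h := hcnt (pfam ω₀ ν bnd (fun _ => fun _ => 1))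
      (pfam_mem (P := fun h => h = ν ∨ h = fun _ => (1:ℝ)) ω₀ ν _ _ (Or.inl rfl) hbnd_cases honef (Or.inr rfl))
    rw [gip_pfam, gdual_const_one] at h
    rw [show (fun y => ν y * (gdual bnd ω₀ y * (1:ℝ))) = fun y => ν y * Db y from
      funext fun y => by rw [← hDbdef]; ring] at h
    exact h
  have hc3 : |avg Z (fun y => ν y * (Db y * Db y)) - 1| ≤ β := by
    have h := hcnt (pfam ω₀ ν bnd bnd)
      (pfam_mem (P := fun h => h = ν ∨ h = fun _ => (1:ℝ)) ω₀ ν _ _ (Or.inl rfl) hbnd_cases hbnd_cases (Or.inr rfl))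
    rw [gip_pfam] at h
    exact h
  have hc4 : |avg Z Db - 1| ≤ β := by
    have h := hcnt (pfam ω₀ (fun _ => 1) bnd (fun _ => fun _ => 1))
      (pfam_mem (P := fun h => h = ν ∨ h = fun _ => (1:ℝ)) ω₀ _ _ _ (Or.inr rfl) hbnd_cases honef (Or.inr rfl))
    rw [gip_pfam, gdual_const_one] at h
    rw [show (fun y => (1:ℝ) * (gdual bnd ω₀ y * (1:ℝ))) = Db from
      funext fun y => by rw [← hDbdef]; ring] at h
    exact h
  have hc5 : |avg Z (fun y => Db y * Db y) - 1| ≤ β := by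
    have h := hcnt (pfam ω₀ (fun _ => 1) bnd bnd)
      (pfam_mem (P := fun h => h = ν ∨ h = fun _ => (1:ℝ)) ω₀ _ _ _ (Or.inr rfl) hbnd_cases hbnd_cases (Or.inr rfl))
    rw [gip_pfam] at h
    rw [show (fun y => (1:ℝ) * (gdual bnd ω₀ y * gdual bnd ω₀ y)) = fun y => Db y * Db y from
      funext fun y => by rw [← hDbdef]; ring] at h
    exact h
  have hν2 : gip (Fin s ⊕ Fin s) Z (fun _ => ν) ≤ 2 := by
    have h := hcnt (fun _ => ν) (fun _ => Or.inl rfl)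
    have := (abs_le.mp h).2
    linarith
  have hc6 : |avg Z (fun y => u y * (D y * D y))| ≤ 2 * η := by
    have h := gip_single_u hν hη hu hν2 (pfam ω₀ u g g) (Sum.elim ω₀ ω₀) ?_ ?_
    · rw [gip_pfam] at h
      exact h
    · unfold pfam
      rw [if_pos (show (fun i => Sum.elim ω₀ ω₀ (Sum.inr i)) = ω₀ from rfl),
        if_pos (show (fun i => Sum.elim ω₀ ω₀ (Sum.inl i)) = ω₀ from rfl)]
    · intro τ hτ
      unfold pfam
      by_cases h1 : (fun i => τ (Sum.inr i)) = ω₀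
      · by_cases h2 : (fun i => τ (Sum.inl i)) = ω₀
        · exfalso
          apply hτ
          funext k
          cases k with
          | inl i => exact congrFun h2 i
          | inr i => exact congrFun h1 i
        · rw [if_pos h1, if_neg h2]
          by_cases h3 : (fun i => τ (Sum.inl i)) ∈ S
          · left; rw [hgS _ h3]; exact hf
          · right; exact hgB _ h3
      · rw [if_neg h1]
        by_cases h2 : (fun i => τ (Sum.inl i)) = ω₀
        · rw [if_pos h2]
          by_cases h3 : (fun i => τ (Sum.inr i)) ∈ S
          · left; rw [hgS _ h3]; exact hf
          · right; exact hgB _ h3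
        · rw [if_neg h2]
          right
          intro x
          norm_num
  -- derived second-moment bounds
  have hEν : avg Z ν ≤ 1 + β := by linarith [(abs_le.mp hc1).2]
  have hEν2 : avg Z ν ≤ 2 := by linarith
  have hQν : avg Z (fun y => ν y * ((Db y - 1) * (Db y - 1))) ≤ 4 * β := by
    have hexp : avg Z (fun y => ν y * ((Db y - 1) * (Db y - 1)))
        = avg Z (fun y => ν y * (Db y * Db y)) -
            2 * avg Z (fun y => ν y * Db y) + avg Z ν := by
      rw [show (fun y => ν y * ((Db y - 1) * (Db y - 1)))
          = fun y => (ν y * (Db y * Db y) - 2 * (ν y * Db y)) + ν y from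
        funext fun y => by ring]
      rw [avg_add, avg_sub]
      rw [show (fun y => 2 * (ν y * Db y)) = fun y => 2 * ((fun z => ν z * Db z) y) from rfl]
      rw [avg_mul_left]
    rw [hexp]
    have h2 := abs_le.mp hc2
    have h3 := abs_le.mp hc3
    linarith
  have hQ1 : avg Z (fun y => (Db y - 1) * (Db y - 1)) ≤ 4 * β := by
    have hexp : avg Z (fun y => (Db y - 1) * (Db y - 1))
        = avg Z (fun y => Db y * Db y) - 2 * avg Z Db + avg Z (fun _ => (1:ℝ)) := by
      rw [show (fun y => (Db y - 1) * (Db y - 1))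
          = fun y => ((fun z => Db z * Db z) y - 2 * (Db y)) + (1:ℝ) from
        funext fun y => by ring]
      rw [avg_add, avg_sub]
      rw [show (fun y => 2 * Db y) = fun y => 2 * ((fun z => Db z) y) from rfl]
      rw [avg_mul_left]
    rw [hexp, avg_one]
    have h4 := abs_le.mp hc4
    have h5 := abs_le.mp hc5
    linarith
  -- the fiber representation
  have hfiber : gip (Fin s) Z g = avg Z (fun y => f y * D y) := by
    rw [gip_fiber g ω₀, hDdef]
    apply congrArg
    funext y
    rw [hgS ω₀ hω₀S]
  -- T1 and T2
  set T1 : ℝ := avg Z (fun y => ν y * (|D y| * ee y)) with hT1def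
  set T2 : ℝ := avg Z (fun y => ν y * (|D y| * ind y)) with hT2def
  have habs : |gip (Fin s) Z g| ≤ T1 + T2 := by
    rw [hfiber]
    refine abs_avg_le.trans ?_
    rw [← avg_add]
    apply avg_mono
    intro y
    have hsum : ee y + ind y = 1 := by
      rcases hind_cases y with ⟨h1, h2, _⟩ | ⟨h1, h2, _⟩ <;> rw [h1, h2] <;> norm_num
    calc |f y * D y| = |f y| * |D y| := abs_mul _ _
      _ ≤ ν y * |D y| := mul_le_mul_of_nonneg_right (hf y) (abs_nonneg _)
      _ = ν y * (|D y| * ee y) + ν y * (|D y| * ind y) := by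
          rw [show ν y * |D y| = ν y * (|D y| * (ee y + ind y)) from by rw [hsum]; ring]
          ring
  have hT1 : T1 ≤ 8 * β := by
    have : T1 ≤ avg Z (fun y => 2 * (ν y * ((Db y - 1) * (Db y - 1)))) := by
      apply avg_mono
      intro y
      rcases hind_cases y with ⟨_, h2, _⟩ | ⟨_, h2, h3⟩
      · rw [h2]
        have := sq_nonneg (Db y - 1)
        have := hν y
        nlinarith [sq_nonneg (Db y - 1)]
      · rw [h2, mul_one]
        have hD := hDDb y
        have hn := hν y
        have h5 : |D y| ≤ 2 * ((Db y - 1) * (Db y - 1)) := by nlinarith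
        calc ν y * |D y| ≤ ν y * (2 * ((Db y - 1) * (Db y - 1))) :=
              mul_le_mul_of_nonneg_left h5 hn
          _ = 2 * (ν y * ((Db y - 1) * (Db y - 1))) := by ring
    refine this.trans ?_
    rw [avg_mul_left]
    linarith [hQν]
  have hT2nn : 0 ≤ T2 := by
    apply avg_nonneg'
    intro y
    have : 0 ≤ ind y := by rcases hind_cases y with ⟨h1,_,_⟩ | ⟨h1,_,_⟩ <;> rw [h1] <;> norm_num
    have := hν y
    positivity
  set R : ℝ := avg Z (fun y => ν y * (D y * D y * ind y)) with hRdef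
  have hT2sq : T2 ^ 2 ≤ avg Z ν * R := by
    have hcs := avg_weighted_cs ν (fun _ => (1:ℝ)) (fun y => |D y| * ind y) hν
    rw [show (fun y => ν y * ((1:ℝ) * (|D y| * ind y))) = fun y => ν y * (|D y| * ind y) from
      funext fun y => by ring] at hcs
    rw [show (fun y => ν y * (1:ℝ) ^ 2) = ν from funext fun y => by ring] at hcs
    rw [show (fun y => ν y * (|D y| * ind y) ^ 2) = fun y => ν y * (D y * D y * ind y) from
      funext fun y => by
        rcases hind_cases y with ⟨h1,_,_⟩ | ⟨h1,_,_⟩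
        · rw [h1]
          simp only [mul_one]
          rw [sq_abs]
          ring
        · rw [h1]
          simp] at hcs
    exact hcs
  -- bound R
  have hupdate : gip (Fin s) Z (Function.update g ω₀ φ) = avg Z (fun y => φ y * D y) := by
    rw [gip_fiber (Function.update g ω₀ φ) ω₀]
    apply congrArg
    funext y
    rw [Function.update_self, gdual_update, hDdef]
  have hfirst : avg Z (fun y => D y * D y * ind y) = 2 * gip (Fin s) Z (Function.update g ω₀ φ) := by
    rw [hupdate]
    rw [show (fun y => D y * D y * ind y) = fun y => 2 * ((fun z => φ z * D z) y) from
      funext fun y => by simp only [hφdef]; ring]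
    rw [avg_mul_left]
  have hsecond : |avg Z (fun y => u y * (D y * D y * ee y))| ≤ 32 * β := by
    refine abs_avg_le.trans ?_
    have hmono : avg Z (fun y => |u y * (D y * D y * ee y)|)
        ≤ avg Z (fun y => 4 * ((Db y - 1) * (Db y - 1)) + ν y * (4 * ((Db y - 1) * (Db y - 1)))) := by
      apply avg_mono
      intro y
      have hDsq : D y * D y ≤ Db y * Db y := by
        have h := hDDb y
        nlinarith [abs_nonneg (D y), neg_abs_le (D y), le_abs_self (D y)]
      have huabs : |u y| ≤ 1 + ν y := by
        simp only [hudef]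
        rw [abs_sub_comm]
        calc |1 - ν y| ≤ |(1:ℝ)| + |ν y| := abs_sub _ _
          _ = 1 + ν y := by rw [abs_one, abs_of_nonneg (hν y)]
      rcases hind_cases y with ⟨_, h2, _⟩ | ⟨_, h2, h3⟩
      · rw [h2]
        simp only [mul_zero, abs_zero]
        have h9 := mul_nonneg (hν y) (mul_self_nonneg (Db y - 1))
        nlinarith [mul_self_nonneg (Db y - 1)]
      · rw [h2, mul_one]
        have hkey : Db y * Db y ≤ 4 * ((Db y - 1) * (Db y - 1)) := by nlinarith
        have hDnn : 0 ≤ D y * D y := mul_self_nonneg _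
        calc |u y * (D y * D y)| = |u y| * (D y * D y) := by
              rw [abs_mul, abs_of_nonneg hDnn]
          _ ≤ (1 + ν y) * (Db y * Db y) := by
              apply mul_le_mul huabs hDsq hDnn (by linarith [hν y])
          _ ≤ (1 + ν y) * (4 * ((Db y - 1) * (Db y - 1))) := by
              apply mul_le_mul_of_nonneg_left hkey (by linarith [hν y])
          _ = 4 * ((Db y - 1) * (Db y - 1)) + ν y * (4 * ((Db y - 1) * (Db y - 1))) := by ring
    refine hmono.trans ?_
    rw [avg_add]
    rw [show (fun y => 4 * ((Db y - 1) * (Db y - 1)))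
        = fun y => 4 * ((fun z => (Db z - 1) * (Db z - 1)) y) from rfl, avg_mul_left]
    have hQν4 : avg Z (fun y => ν y * (4 * ((Db y - 1) * (Db y - 1)))) ≤ 16 * β := by
      rw [show (fun y => ν y * (4 * ((Db y - 1) * (Db y - 1))))
          = fun y => 4 * ((fun z => ν z * ((Db z - 1) * (Db z - 1))) y) from
        funext fun y => by ring, avg_mul_left]
      linarith [hQν]
    linarith [hQ1, hQν4]
  have hsplitR : R = avg Z (fun y => D y * D y * ind y) + avg Z (fun y => u y * (D y * D y * ind y)) := by
    rw [hRdef, ← avg_add]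
    apply congrArg
    funext y
    simp only [hudef]
    ring
  have huind : avg Z (fun y => u y * (D y * D y * ind y))
      = avg Z (fun y => u y * (D y * D y)) - avg Z (fun y => u y * (D y * D y * ee y)) := by
    rw [← avg_sub]
    apply congrArg
    funext y
    have hsum : ee y + ind y = 1 := by
      rcases hind_cases y with ⟨h1, h2, _⟩ | ⟨h1, h2, _⟩ <;> rw [h1, h2] <;> norm_num
    have : ind y = 1 - ee y := by linarith
    rw [this]
    ring
  have hR : R ≤ 2 * |gip (Fin s) Z (Function.update g ω₀ φ)| + 34 * β := by
    rw [hsplitR, hfirst, huind]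
    have h6 : avg Z (fun y => u y * (D y * D y)) ≤ 2 * β := by
      have := (abs_le.mp hc6).2
      linarith [hηβ]
    have h7 : -avg Z (fun y => u y * (D y * D y * ee y)) ≤ 32 * β := by
      have := (abs_le.mp hsecond).1
      linarith
    have h8 : 2 * gip (Fin s) Z (Function.update g ω₀ φ)
        ≤ 2 * |gip (Fin s) Z (Function.update g ω₀ φ)| := by
      have := le_abs_self (gip (Fin s) Z (Function.update g ω₀ φ))
      linarith
    linarith
  have hRnn : 0 ≤ R := by
    apply avg_nonneg'
    intro y
    have h1 : 0 ≤ ind y := by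
      rcases hind_cases y with ⟨h1,_,_⟩ | ⟨h1,_,_⟩ <;> rw [h1] <;> norm_num
    have := hν y
    have := mul_self_nonneg (D y)
    positivity
  -- conclusion
  have hT2fin : T2 ≤ Real.sqrt (4 * |gip (Fin s) Z (Function.update g ω₀ φ)| + 68 * β) := by
    have hsq : T2 ^ 2 ≤ 4 * |gip (Fin s) Z (Function.update g ω₀ φ)| + 68 * β := by
      calc T2 ^ 2 ≤ avg Z ν * R := hT2sq
        _ ≤ 2 * (2 * |gip (Fin s) Z (Function.update g ω₀ φ)| + 34 * β) := by
            apply mul_le_mul hEν2 hR hRnn (by norm_num)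
        _ = 4 * |gip (Fin s) Z (Function.update g ω₀ φ)| + 68 * β := by ring
    calc T2 = Real.sqrt (T2 ^ 2) := (Real.sqrt_sq hT2nn).symm
      _ ≤ _ := Real.sqrt_le_sqrt hsq
  calc |gip (Fin s) Z g| ≤ T1 + T2 := habs
    _ ≤ 8 * β + Real.sqrt (4 * |gip (Fin s) Z (Function.update g ω₀ φ)| + 68 * β) := by
        apply add_le_add hT1 hT2fin

end Step
section Base
variable {Z : Type*} [AddCommGroup Z] [Fintype Z] [Nonempty Z]

lemma avg_neg {α : Type*} [Fintype α] (F : α → ℝ) :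
    avg α (fun x => -(F x)) = - avg α F := by
  rw [show (fun x => -(F x)) = fun x => (-1 : ℝ) * F x from funext fun x => by ring,
    avg_mul_left]
  ring

lemma base_lemma (s : ℕ) (hs : 2 ≤ s) (ν f : Z → ℝ)
    (hν : ∀ x, 0 ≤ ν x) (hf : ∀ x, |f x| ≤ ν x)
    (g : (Fin s → Bool) → Z → ℝ)
    (hg0 : g (fun _ => false) = f)
    (hgB : ∀ ω, ω ≠ (fun _ => false) → ∀ x, |g ω x| ≤ 1) :
    |gip (Fin s) Z g| ≤ weakNorm Z s f := by
  classical
  set zf : Fin s → Bool := fun _ => false with hzf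
  set SET : Set ℝ := {r : ℝ | ∃ h : (Fin s → Bool) → Z → ℝ,
    (∀ ω x, h ω x ∈ Set.Icc (-1 : ℝ) 1) ∧
    r = avg (Z × (Fin s → Z)) fun xh =>
      f xh.1 * ∏ ω ∈ Finset.univ.filter (fun ω : Fin s → Bool => ω ≠ fun _ => false),
        h ω (xh.1 + ∑ i, if ω i then xh.2 i else 0)} with hSET
  have hwn : weakNorm Z s f = sSup SET := rfl
  -- generic representation
  have hrep : ∀ (k : (Fin s → Bool) → Z → ℝ), (∀ ω, ω ≠ zf → k ω = g ω) →
      (avg (Z × (Fin s → Z)) fun xh =>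
        f xh.1 * ∏ ω ∈ Finset.univ.filter (fun ω : Fin s → Bool => ω ≠ fun _ => false),
          k ω (xh.1 + ∑ i, if ω i then xh.2 i else 0)) = gip (Fin s) Z g := by
    intro k hk
    unfold gip
    apply congrArg
    funext xh
    have hfilter : Finset.univ.filter (fun ω : Fin s → Bool => ω ≠ fun _ => false)
        = Finset.univ.erase zf := by
      rw [Finset.filter_ne']
    rw [hfilter]
    rw [← Finset.mul_prod_erase Finset.univ
      (fun ω => g ω (xh.1 + lsum ω xh.2)) (Finset.mem_univ zf)]
    have h0 : g zf (xh.1 + lsum zf xh.2) = f xh.1 := by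
      rw [show lsum zf xh.2 = 0 from lsum_zero_fun xh.2, add_zero, hzf, hg0]
    rw [h0]
    congr 1
    apply Finset.prod_congr rfl
    intro ω hω
    rw [hk ω (Finset.ne_of_mem_erase hω)]
    rfl
  -- the two witnesses
  set k1 : (Fin s → Bool) → Z → ℝ := fun ω => if ω = zf then (fun _ => 0) else g ω with hk1
  have hk1g : ∀ ω, ω ≠ zf → k1 ω = g ω := by
    intro ω hω; simp only [hk1, if_neg hω]
  have hk1b : ∀ ω x, k1 ω x ∈ Set.Icc (-1 : ℝ) 1 := by
    intro ω x
    by_cases hω : ω = zf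
    · simp [hk1, hω]
    · simp only [hk1, if_neg hω]
      exact ⟨neg_le_of_abs_le (hgB ω hω x), le_of_abs_le (hgB ω hω x)⟩
  set ωt : Fin s → Bool := fun _ => true with hωt
  have hωtz : ωt ≠ zf := by
    intro h
    have := congrFun h ⟨0, by omega⟩
    simp [hωt, hzf] at this
  set k2 : (Fin s → Bool) → Z → ℝ :=
    fun ω => if ω = ωt then (fun x => -(k1 ω x)) else k1 ω with hk2
  have hk2b : ∀ ω x, k2 ω x ∈ Set.Icc (-1 : ℝ) 1 := by
    intro ω x
    by_cases hω : ω = ωt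
    · simp only [hk2, if_pos hω]
      have := hk1b ω x
      constructor <;> [linarith [this.2]; linarith [this.1]]
    · simp only [hk2, if_neg hω]
      exact hk1b ω x
  -- membership of gip g
  have hmem1 : gip (Fin s) Z g ∈ SET := by
    refine ⟨k1, hk1b, ?_⟩
    rw [hrep k1 hk1g]
  -- membership of the negative
  have hmem2 : -(gip (Fin s) Z g) ∈ SET := by
    refine ⟨k2, hk2b, ?_⟩
    have hneg : (avg (Z × (Fin s → Z)) fun xh =>
        f xh.1 * ∏ ω ∈ Finset.univ.filter (fun ω : Fin s → Bool => ω ≠ fun _ => false),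
          k2 ω (xh.1 + ∑ i, if ω i then xh.2 i else 0))
        = - (avg (Z × (Fin s → Z)) fun xh =>
        f xh.1 * ∏ ω ∈ Finset.univ.filter (fun ω : Fin s → Bool => ω ≠ fun _ => false),
          k1 ω (xh.1 + ∑ i, if ω i then xh.2 i else 0)) := by
      rw [← avg_neg]
      apply congrArg
      funext xh
      have hmem : ωt ∈ Finset.univ.filter (fun ω : Fin s → Bool => ω ≠ fun _ => false) := by
        rw [Finset.mem_filter]
        exact ⟨Finset.mem_univ _, hωtz⟩
      rw [← Finset.mul_prod_erase _
        (fun ω => k2 ω (xh.1 + ∑ i, if ω i then xh.2 i else 0)) hmem]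
      rw [← Finset.mul_prod_erase _
        (fun ω => k1 ω (xh.1 + ∑ i, if ω i then xh.2 i else 0)) hmem]
      have hk2t : k2 ωt = fun x => -(k1 ωt x) := by simp [hk2]
      have hprod : (∏ ω ∈ (Finset.univ.filter
            (fun ω : Fin s → Bool => ω ≠ fun _ => false)).erase ωt,
          k2 ω (xh.1 + ∑ i, if ω i then xh.2 i else 0))
          = ∏ ω ∈ (Finset.univ.filter
            (fun ω : Fin s → Bool => ω ≠ fun _ => false)).erase ωt,
          k1 ω (xh.1 + ∑ i, if ω i then xh.2 i else 0) := by
        apply Finset.prod_congr rfl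
        intro ω hω
        rw [show k2 ω = k1 ω from by simp [hk2, Finset.ne_of_mem_erase hω]]
      rw [hk2t, hprod]
      ring
    rw [hneg, hrep k1 hk1g]
  -- boundedness
  have hbdd : BddAbove SET := by
    refine ⟨avg Z ν, ?_⟩
    rintro r ⟨k, hkb, rfl⟩
    have : (avg (Z × (Fin s → Z)) fun xh =>
        f xh.1 * ∏ ω ∈ Finset.univ.filter (fun ω : Fin s → Bool => ω ≠ fun _ => false),
          k ω (xh.1 + ∑ i, if ω i then xh.2 i else 0))
        ≤ avg (Z × (Fin s → Z)) (fun xh => ν xh.1) := by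
      apply avg_mono
      intro xh
      have hprodb : |∏ ω ∈ Finset.univ.filter (fun ω : Fin s → Bool => ω ≠ fun _ => false),
          k ω (xh.1 + ∑ i, if ω i then xh.2 i else 0)| ≤ 1 := by
        rw [Finset.abs_prod]
        apply Finset.prod_le_one
        · intro ω _; exact abs_nonneg _
        · intro ω _
          have := hkb ω (xh.1 + ∑ i, if ω i then xh.2 i else 0)
          exact abs_le.mpr ⟨this.1, this.2⟩
      calc f xh.1 * ∏ ω ∈ Finset.univ.filter (fun ω : Fin s → Bool => ω ≠ fun _ => false),
            k ω (xh.1 + ∑ i, if ω i then xh.2 i else 0)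
          ≤ |f xh.1 * ∏ ω ∈ Finset.univ.filter (fun ω : Fin s → Bool => ω ≠ fun _ => false),
            k ω (xh.1 + ∑ i, if ω i then xh.2 i else 0)| := le_abs_self _
        _ = |f xh.1| * |∏ ω ∈ Finset.univ.filter (fun ω : Fin s → Bool => ω ≠ fun _ => false),
            k ω (xh.1 + ∑ i, if ω i then xh.2 i else 0)| := abs_mul _ _
        _ ≤ ν xh.1 * 1 := mul_le_mul (hf _) hprodb (abs_nonneg _) (hν _)
        _ = ν xh.1 := mul_one _
    refine this.trans (le_of_eq ?_)
    rw [avg_prod]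
    apply congrArg
    funext x
    show avg (Fin s → Z) (fun _ => ν x) = ν x
    exact avg_const _
  rw [hwn]
  apply abs_le.mpr
  constructor
  · have := le_csSup hbdd hmem2
    linarith
  · exact le_csSup hbdd hmem1

end Base
section MainRec

lemma main_rec (s : ℕ) (hs : 2 ≤ s) (n : ℕ) :
    ∀ θ : ℝ, 0 < θ → ∃ η : ℝ, 0 < η ∧ η ≤ 1 ∧
      ∀ (Z : Type) [AddCommGroup Z] [Fintype Z] [Nonempty Z] (ν f : Z → ℝ),
        (∀ x, 0 ≤ ν x) → (∀ x, |f x| ≤ ν x) →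
        gip (Fin s ⊕ Fin s) Z (fun _ => fun x => ν x - 1) ≤
          η ^ (2 ^ Fintype.card (Fin s ⊕ Fin s)) →
        weakNorm Z s f ≤ η →
        ∀ (S : Finset (Fin s → Bool)), (fun _ => false) ∈ S → S.card ≤ n + 1 →
        ∀ (g : (Fin s → Bool) → Z → ℝ), (∀ ω ∈ S, g ω = f) → (∀ ω ∉ S, ∀ x, |g ω x| ≤ 1) →
        |gip (Fin s) Z g| ≤ θ := by
  induction n with
  | zero =>
      intro θ hθ
      refine ⟨min 1 θ, by positivity, min_le_left _ _, ?_⟩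
      intro Z _ _ _ ν f hν hf hu hw S hzS hcard g hgS hgB
      have hSsing : ∀ b ∈ S, b = (fun _ => false : Fin s → Bool) :=
        fun b hb => Finset.card_le_one.mp hcard b hb _ hzS
      have hg0 : g (fun _ => false) = f := hgS _ hzS
      have hgB' : ∀ ω, ω ≠ (fun _ => false : Fin s → Bool) → ∀ x, |g ω x| ≤ 1 := by
        intro ω hω
        apply hgB
        intro hωS
        exact hω (hSsing ω hωS)
      exact (base_lemma s hs ν f hν hf g hg0 hgB').trans (hw.trans (min_le_right _ _))
  | succ n IH =>
      intro θ hθ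
      obtain ⟨η₁, hη₁0, hη₁1, H1⟩ := IH θ hθ
      obtain ⟨η₂, hη₂0, hη₂1, H2⟩ := IH (θ ^ 2 / 32) (by positivity)
      set CC : ℝ := (2:ℝ) ^ (2 ^ Fintype.card (Fin s ⊕ Fin s)) with hCCdef
      have hCC0 : (0:ℝ) < CC := by positivity
      have hCC1 : (1:ℝ) ≤ CC := one_le_pow₀ (by norm_num)
      refine ⟨min η₁ (min η₂ (min (θ/16/CC) (min (θ^2/544/CC) (1/CC)))), ?_, ?_, ?_⟩
      · apply lt_min hη₁0
        apply lt_min hη₂0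
        apply lt_min (by positivity)
        exact lt_min (by positivity) (by positivity)
      · exact le_trans (min_le_left _ _) hη₁1
      intro Z _ _ _ ν f hν hf hu hw S hzS hcard g hgS hgB
      set η : ℝ := min η₁ (min η₂ (min (θ/16/CC) (min (θ^2/544/CC) (1/CC)))) with hηdef
      have hη0 : 0 ≤ η := le_of_lt (by
        apply lt_min hη₁0
        apply lt_min hη₂0
        apply lt_min (by positivity)
        exact lt_min (by positivity) (by positivity))
      have hηη₁ : η ≤ η₁ := min_le_left _ _
      have hηη₂ : η ≤ η₂ := le_trans (min_le_right _ _) (min_le_left _ _)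
      have hη316 : η ≤ θ/16/CC :=
        le_trans (min_le_right _ _) (le_trans (min_le_right _ _) (min_le_left _ _))
      have hη544 : η ≤ θ^2/544/CC :=
        le_trans (min_le_right _ _) (le_trans (min_le_right _ _)
          (le_trans (min_le_right _ _) (min_le_left _ _)))
      have hη1CC : η ≤ 1/CC :=
        le_trans (min_le_right _ _) (le_trans (min_le_right _ _)
          (le_trans (min_le_right _ _) (min_le_right _ _)))
      have hCCη16 : CC * η ≤ θ/16 := by
        calc CC * η ≤ CC * (θ/16/CC) := mul_le_mul_of_nonneg_left hη316 (le_of_lt hCC0)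
          _ = θ/16 := by field_simp
      have hCCη544 : CC * η ≤ θ^2/544 := by
        calc CC * η ≤ CC * (θ^2/544/CC) := mul_le_mul_of_nonneg_left hη544 (le_of_lt hCC0)
          _ = θ^2/544 := by field_simp
      have hCCη1 : CC * η ≤ 1 := by
        calc CC * η ≤ CC * (1/CC) := mul_le_mul_of_nonneg_left hη1CC (le_of_lt hCC0)
          _ = 1 := by field_simp
      have hη1 : η ≤ 1 := le_trans hηη₁ hη₁1
      have hu₁ : gip (Fin s ⊕ Fin s) Z (fun _ => fun x => ν x - 1) ≤
          η₁ ^ (2 ^ Fintype.card (Fin s ⊕ Fin s)) :=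
        hu.trans (pow_le_pow_left₀ hη0 hηη₁ _)
      have hu₂ : gip (Fin s ⊕ Fin s) Z (fun _ => fun x => ν x - 1) ≤
          η₂ ^ (2 ^ Fintype.card (Fin s ⊕ Fin s)) :=
        hu.trans (pow_le_pow_left₀ hη0 hηη₂ _)
      by_cases hc : S.card ≤ n + 1
      · exact H1 Z ν f hν hf hu₁ (hw.trans hηη₁) S hzS hc g hgS hgB
      · have hcard2 : 1 < S.card := by
          have : 1 ≤ S.card := Finset.card_pos.mpr ⟨_, hzS⟩
          omega
        obtain ⟨ω₀, hω₀S, hω₀⟩ := Finset.exists_mem_ne hcard2 (fun _ => false)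
        obtain ⟨φ, hφ, hstep⟩ := step_lemma s hs ν f η hν hf hη0 hη1 hu hCCη1 S ω₀ hω₀S g hgS hgB
        have hS' : (fun _ => false : Fin s → Bool) ∈ S.erase ω₀ :=
          Finset.mem_erase.mpr ⟨Ne.symm hω₀, hzS⟩
        have hcard' : (S.erase ω₀).card ≤ n + 1 := by
          rw [Finset.card_erase_of_mem hω₀S]
          omega
        have hg'S : ∀ ω ∈ S.erase ω₀, Function.update g ω₀ φ ω = f := by
          intro ω hω
          rw [Function.update_of_ne (Finset.ne_of_mem_erase hω)]
          exact hgS ω (Finset.mem_of_mem_erase hω)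
        have hg'B : ∀ ω ∉ S.erase ω₀, ∀ x, |(Function.update g ω₀ φ) ω x| ≤ 1 := by
          intro ω hω x
          by_cases h : ω = ω₀
          · rw [h, Function.update_self]
            exact hφ x
          · rw [Function.update_of_ne h]
            apply hgB
            intro hωS
            exact hω (Finset.mem_erase.mpr ⟨h, hωS⟩)
        have hG' := H2 Z ν f hν hf hu₂ (hw.trans hηη₂) (S.erase ω₀) hS' hcard'
          (Function.update g ω₀ φ) hg'S hg'B
        refine hstep.trans ?_
        have h1 : 8 * (CC * η) ≤ θ/2 := by linarith
        have h2 : Real.sqrt (4 * |gip (Fin s) Z (Function.update g ω₀ φ)| + 68 * (CC * η))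
            ≤ θ/2 := by
          have hle : 4 * |gip (Fin s) Z (Function.update g ω₀ φ)| + 68 * (CC * η)
              ≤ (θ/2)^2 := by
            have ha : 4 * |gip (Fin s) Z (Function.update g ω₀ φ)| ≤ 4 * (θ^2/32) := by
              linarith [hG']
            nlinarith
          calc Real.sqrt (4 * |gip (Fin s) Z (Function.update g ω₀ φ)| + 68 * (CC * η))
              ≤ Real.sqrt ((θ/2)^2) := Real.sqrt_le_sqrt hle
            _ = θ/2 := Real.sqrt_sq (by positivity)
        linarith

end MainRec
theorem stmt0 (s : ℕ) (hs : 2 ≤ s) (ε : ℝ) (hε : 0 < ε) :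
    ∃ η : ℝ, 0 < η ∧ η ≤ 1 ∧
      ∀ (Z : Type) [AddCommGroup Z] [Fintype Z] (ν f : Z → ℝ),
        (∀ x, 0 ≤ ν x) →
        gowersNorm Z (2 * s) (fun x => ν x - 1) ≤ η →
        (∀ x, |f x| ≤ ν x) →
        weakNorm Z s f ≤ η →
        gowersNorm Z s f ≤ ε := by
  classical
  set ε' : ℝ := min ε 1 with hε'def
  have hε' : 0 < ε' := lt_min hε one_pos
  obtain ⟨η, hη0, hη1, H⟩ := main_rec s hs (2^s - 1) (ε' ^ (2^s)) (by positivity)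
  refine ⟨η, hη0, hη1, ?_⟩
  intro Z _ _ ν f hν h2 hf hw
  by_cases hZ : Nonempty Z
  · haveI := hZ
    haveI : Nonempty (Fin (2*s)) := ⟨⟨0, by omega⟩⟩
    haveI : Nonempty (Fin s) := ⟨⟨0, by omega⟩⟩
    set u : Z → ℝ := fun x => ν x - 1 with hudef
    have hA0 : 0 ≤ gip (Fin (2*s)) Z (fun _ => u) := gip_const_nonneg u
    have hgow : gowersNorm Z (2*s) u = (gip (Fin (2*s)) Z (fun _ => u)) ^ (((2:ℝ)^(2*s))⁻¹) := rfl
    have hcast : ((2:ℝ)^(2*s)) = ((2^(2*s) : ℕ) : ℝ) := by push_cast; ring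
    have hApow : gip (Fin (2*s)) Z (fun _ => u) ≤ η ^ (2^(2*s)) := by
      have hle : (gip (Fin (2*s)) Z (fun _ => u)) ^ (((2:ℝ)^(2*s))⁻¹) ≤ η := by
        rw [← hgow]
        exact h2
      have hr : ((gip (Fin (2*s)) Z (fun _ => u)) ^ (((2:ℝ)^(2*s))⁻¹)) ^ (2^(2*s) : ℕ)
          ≤ η ^ (2^(2*s) : ℕ) :=
        pow_le_pow_left₀ (Real.rpow_nonneg hA0 _) hle _
      rw [hcast] at hr
      rwa [Real.rpow_inv_natCast_pow hA0 (by positivity)] at hr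
    have hcardsum : Fintype.card (Fin s ⊕ Fin s) = 2*s := by
      rw [Fintype.card_sum, Fintype.card_fin]
      ring
    have hre : gip (Fin (2*s)) Z (fun _ => u) = gip (Fin s ⊕ Fin s) Z (fun _ => u) := by
      rw [gip_reindex (finSumFinEquiv.trans (finCongr (show s + s = 2*s by ring))) (fun _ => u)]
    have hufinal : gip (Fin s ⊕ Fin s) Z (fun _ => fun x => ν x - 1) ≤
        η ^ (2 ^ Fintype.card (Fin s ⊕ Fin s)) := by
      rw [hcardsum, ← hre]
      exact hApow
    have hcard : (Finset.univ : Finset (Fin s → Bool)).card ≤ (2^s - 1) + 1 := by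
      rw [Finset.card_univ, Fintype.card_fun, Fintype.card_bool, Fintype.card_fin]
      have : 1 ≤ 2^s := Nat.one_le_two_pow
      omega
    have hfin := H Z ν f hν hf hufinal hw Finset.univ (Finset.mem_univ _) hcard
      (fun _ => f) (fun _ _ => rfl) (fun ω hω => absurd (Finset.mem_univ ω) hω)
    have hA'0 : 0 ≤ gip (Fin s) Z (fun _ => f) := gip_const_nonneg f
    have hA' : gip (Fin s) Z (fun _ => f) ≤ ε' ^ (2^s) := le_trans (le_abs_self _) hfin
    have hgow2 : gowersNorm Z s f = (gip (Fin s) Z (fun _ => f)) ^ (((2:ℝ)^s)⁻¹) := rfl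
    rw [hgow2]
    have hcast2 : ((2:ℝ)^s) = ((2^s : ℕ) : ℝ) := by push_cast; ring
    calc (gip (Fin s) Z (fun _ => f)) ^ (((2:ℝ)^s)⁻¹)
        ≤ (ε' ^ (2^s : ℕ)) ^ (((2:ℝ)^s)⁻¹) := Real.rpow_le_rpow hA'0 hA' (by positivity)
      _ = ε' := by
          rw [hcast2, Real.pow_rpow_inv_natCast (le_of_lt hε') (by positivity)]
      _ ≤ ε := min_le_left _ _
  · haveI : IsEmpty Z := not_nonempty_iff.mp hZ
    have hzero : gowersNorm Z s f = 0 := by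
      unfold gowersNorm
      have h0 : (avg (Z × (Fin s → Z)) fun xh =>
          ∏ ω : Fin s → Bool, f (xh.1 + ∑ i, if ω i then xh.2 i else 0)) = 0 := by
        unfold avg
        rw [Finset.univ_eq_empty, Finset.sum_empty, zero_div]
      rw [h0]
      exact Real.zero_rpow (by positivity)
    rw [hzero]
    linarith
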